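/- arXiv:1308.4528 — 5 statements merged into one kernel-verified Lean document; each statement's English description precedes it below -/
import Mathlib

section
/- Let $p$ be a prime and let $G \subseteq \mathrm{GL}_2(\mathbb{F}_p)$ be a subgroup whose image in $\mathrm{PGL}_2(\mathbb{F}_p)$ is isomorphic to $A_4$, $S_4$, or $A_5$, and such that $p \nmid \#G$. Then $G$ meets the center of $\mathrm{GL}_2(\mathbb{F}_p)$ non-trivially. -/
open Matrix

section MatrixPart

variable {F : Type*} [Field F]

private lemma trace_zero {a : Matrix (Fin 2) (Fin 2) F}
    (ha : a * a = 1) (h1 : a ≠ 1) (h1' : a ≠ -1) : a 1 1 = - a 0 0 := by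
  have h00 := congrFun (congrFun ha 0) 0
  have h01 := congrFun (congrFun ha 0) 1
  have h10 := congrFun (congrFun ha 1) 0
  have h11 := congrFun (congrFun ha 1) 1
  simp [Matrix.mul_apply, Fin.sum_univ_two, Matrix.one_apply] at h00 h01 h10 h11
  by_cases ht : a 0 0 + a 1 1 = 0
  · linear_combination ht
  · have hy : a 0 1 = 0 := by
      rcases mul_eq_zero.mp (show a 0 1 * (a 0 0 + a 1 1) = 0 by linear_combination h01) with h | h
      · exact h
      · exact absurd h ht
    have hz : a 1 0 = 0 := by
      rcases mul_eq_zero.mp (show a 1 0 * (a 0 0 + a 1 1) = 0 by linear_combination h10) with h | h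
      · exact h
      · exact absurd h ht
    rw [hy] at h00
    rw [hz] at h11
    simp at h00 h11
    rcases mul_self_eq_one_iff.mp h00 with hx | hx <;>
      rcases mul_self_eq_one_iff.mp h11 with hw | hw
    · exact absurd (by ext i j; fin_cases i <;> fin_cases j <;>
        simp [hx, hw, hy, hz, Matrix.one_apply]) h1
    · exact absurd (by rw [hx, hw]; ring) ht
    · exact absurd (by rw [hx, hw]; ring) ht
    · exact absurd (by ext i j; fin_cases i <;> fin_cases j <;>
        simp [hx, hw, hy, hz, Matrix.one_apply]) h1'

private lemma smul_cases {a b : Matrix (Fin 2) (Fin 2) F} (ha : a * a = 1) (hb : b * b = 1)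
    {c d : F} (hc : c ≠ 0) (hsm : c • b = d • a) : b = a ∨ b = -a := by
  have hsq : (c * c) • (1 : Matrix (Fin 2) (Fin 2) F) = (d * d) • 1 := by
    calc (c * c) • (1 : Matrix (Fin 2) (Fin 2) F) = (c • b) * (c • b) := by
          rw [smul_mul_smul_comm, hb]
      _ = (d • a) * (d • a) := by rw [hsm]
      _ = (d * d) • 1 := by rw [smul_mul_smul_comm, ha]
  have hsq' : c * c = d * d := by simpa using congrFun (congrFun hsq 0) 0
  rcases mul_self_eq_mul_self_iff.mp hsq' with he | he
  · left
    refine smul_right_injective (Matrix (Fin 2) (Fin 2) F) hc ?_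
    show c • b = c • a
    rw [hsm, he]
  · right
    refine smul_right_injective (Matrix (Fin 2) (Fin 2) F) hc ?_
    show c • b = c • (-a)
    rw [hsm, he, smul_neg, neg_smul, neg_neg]

private lemma klein_matrix (h2 : (2:F) ≠ 0) {a b : Matrix (Fin 2) (Fin 2) F}
    (ha : a * a = 1) (hb : b * b = 1) (hc : a * b = b * a)
    (ha1 : a ≠ 1) (ha1' : a ≠ -1) (hb1 : b ≠ 1) (hb1' : b ≠ -1)
    (hab1 : a * b ≠ 1) (hab1' : a * b ≠ -1) : False := by
  have endgame : b = a ∨ b = -a → False := by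
    rintro (rfl | rfl)
    · exact hab1 hb
    · exact hab1' (by rw [mul_neg, ha])
  have hwa := trace_zero ha ha1 ha1'
  have hwb := trace_zero hb hb1 hb1'
  have ha00 := congrFun (congrFun ha 0) 0
  have hb00 := congrFun (congrFun hb 0) 0
  simp [Matrix.mul_apply, Fin.sum_univ_two, Matrix.one_apply] at ha00 hb00
  have hc00 := congrFun (congrFun hc 0) 0
  have hc01 := congrFun (congrFun hc 0) 1
  have hc10 := congrFun (congrFun hc 1) 0
  simp [Matrix.mul_apply, Fin.sum_univ_two, hwa, hwb] at hc00 hc01 hc10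
  have r1 : a 0 1 * b 1 0 = b 0 1 * a 1 0 := by linear_combination hc00
  have r2 : a 0 0 * b 0 1 = a 0 1 * b 0 0 := by
    rcases mul_eq_zero.mp (show (2:F) * (a 0 0 * b 0 1 - a 0 1 * b 0 0) = 0 by
      linear_combination hc01) with h | h
    · exact absurd h h2
    · linear_combination h
  have r3 : b 0 0 * a 1 0 = b 1 0 * a 0 0 := by
    rcases mul_eq_zero.mp (show (2:F) * (b 0 0 * a 1 0 - b 1 0 * a 0 0) = 0 by
      linear_combination hc10) with h | h
    · exact absurd h h2
    · linear_combination h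
  by_cases hy : a 0 1 = 0
  · by_cases hz : a 1 0 = 0
    · rw [hy, hz] at ha00
      simp at ha00
      have hx0 : a 0 0 ≠ 0 := fun h => by rw [h] at ha00; simp at ha00
      have hf : b 0 1 = 0 := by
        rw [hy] at r2
        simp at r2
        rcases r2 with h | h
        · exact absurd h hx0
        · exact h
      have hg : b 1 0 = 0 := by
        rw [hz] at r3
        simp at r3
        rcases r3 with h | h
        · exact h
        · exact absurd h hx0
      rw [hf, hg] at hb00
      simp at hb00
      have heq : b 0 0 * b 0 0 = a 0 0 * a 0 0 := by rw [ha00, hb00]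
      rcases mul_self_eq_mul_self_iff.mp heq with he | he <;>
        [refine endgame (Or.inl ?_); refine endgame (Or.inr ?_)] <;>
        · ext i j; fin_cases i <;> fin_cases j <;>
            simp [he, hf, hg, hy, hz, hwa, hwb]
    · refine endgame (smul_cases ha hb (d := b 1 0) hz ?_)
      ext i j
      fin_cases i <;> fin_cases j
      · simp [hwa, hwb]; linear_combination r3
      · simp [hwa, hwb]; linear_combination -r1
      · simp [hwa, hwb]; ring
      · simp [hwa, hwb]; linear_combination r3
  · refine endgame (smul_cases ha hb (d := b 0 1) hy ?_)
    ext i j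
    fin_cases i <;> fin_cases j
    · simp [hwa, hwb]; linear_combination -r2
    · simp [hwa, hwb]; ring
    · simp [hwa, hwb]; linear_combination r1
    · simp [hwa, hwb]; linear_combination -r2

end MatrixPart

private lemma exists_klein {H K : Type*} [Group H] [Group K] (e : H ≃* K)
    {x y : K} (hx : x * x = 1) (hy : y * y = 1) (hcm : x * y = y * x)
    (hx1 : x ≠ 1) (hy1 : y ≠ 1) (hxy1 : x * y ≠ 1) :
    ∃ u v : H, u * u = 1 ∧ v * v = 1 ∧ u * v = v * u ∧ u ≠ 1 ∧ v ≠ 1 ∧ u * v ≠ 1 := by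
  refine ⟨e.symm x, e.symm y, ?_, ?_, ?_, ?_, ?_, ?_⟩
  · rw [← _root_.map_mul, hx, _root_.map_one]
  · rw [← _root_.map_mul, hy, _root_.map_one]
  · rw [← _root_.map_mul, ← _root_.map_mul, hcm]
  · intro h; apply hx1; have := congrArg e h; simpa using this
  · intro h; apply hy1; have := congrArg e h; simpa using this
  · intro h; apply hxy1
    rw [← _root_.map_mul] at h
    have := congrArg e h; simpa using this

section Concrete

private def s4x : Equiv.Perm (Fin 4) := Equiv.swap 0 1 * Equiv.swap 2 3
private def s4y : Equiv.Perm (Fin 4) := Equiv.swap 0 2 * Equiv.swap 1 3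
private def s5x : Equiv.Perm (Fin 5) := Equiv.swap 0 1 * Equiv.swap 2 3
private def s5y : Equiv.Perm (Fin 5) := Equiv.swap 0 2 * Equiv.swap 1 3

private def a4x : alternatingGroup (Fin 4) :=
  ⟨s4x, by rw [Equiv.Perm.mem_alternatingGroup]; decide⟩
private def a4y : alternatingGroup (Fin 4) :=
  ⟨s4y, by rw [Equiv.Perm.mem_alternatingGroup]; decide⟩
private def a5x : alternatingGroup (Fin 5) :=
  ⟨s5x, by rw [Equiv.Perm.mem_alternatingGroup]; decide⟩
private def a5y : alternatingGroup (Fin 5) :=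
  ⟨s5y, by rw [Equiv.Perm.mem_alternatingGroup]; decide⟩

private lemma a4_facts : a4x * a4x = 1 ∧ a4y * a4y = 1 ∧ a4x * a4y = a4y * a4x ∧
    a4x ≠ 1 ∧ a4y ≠ 1 ∧ a4x * a4y ≠ 1 :=
  ⟨Subtype.ext (by decide), Subtype.ext (by decide), Subtype.ext (by decide),
    fun h => absurd (congrArg Subtype.val h) (by decide),
    fun h => absurd (congrArg Subtype.val h) (by decide),
    fun h => absurd (congrArg Subtype.val h) (by decide)⟩

private lemma s4_facts : s4x * s4x = 1 ∧ s4y * s4y = 1 ∧ s4x * s4y = s4y * s4x ∧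
    s4x ≠ 1 ∧ s4y ≠ 1 ∧ s4x * s4y ≠ 1 := by
  refine ⟨by decide, by decide, by decide, by decide, by decide, by decide⟩

private lemma a5_facts : a5x * a5x = 1 ∧ a5y * a5y = 1 ∧ a5x * a5y = a5y * a5x ∧
    a5x ≠ 1 ∧ a5y ≠ 1 ∧ a5x * a5y ≠ 1 :=
  ⟨Subtype.ext (by decide), Subtype.ext (by decide), Subtype.ext (by decide),
    fun h => absurd (congrArg Subtype.val h) (by decide),
    fun h => absurd (congrArg Subtype.val h) (by decide),
    fun h => absurd (congrArg Subtype.val h) (by decide)⟩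

end Concrete

/-- If `G ⊆ GL₂(𝔽_p)` has order prime to `p` and its image in `PGL₂(𝔽_p)` is isomorphic to
`A₄`, `S₄`, or `A₅`, then `G` meets the center of `GL₂(𝔽_p)` non-trivially. -/
theorem stmt_3 (p : ℕ) [Fact p.Prime]
    (G : Subgroup (GL (Fin 2) (ZMod p)))
    (hord : ¬ p ∣ Nat.card G)
    (hima : Nonempty (↥(G.map (QuotientGroup.mk' (Subgroup.center (GL (Fin 2) (ZMod p))))) ≃*
        alternatingGroup (Fin 4)) ∨
      Nonempty (↥(G.map (QuotientGroup.mk' (Subgroup.center (GL (Fin 2) (ZMod p))))) ≃*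
        Equiv.Perm (Fin 4)) ∨
      Nonempty (↥(G.map (QuotientGroup.mk' (Subgroup.center (GL (Fin 2) (ZMod p))))) ≃*
        alternatingGroup (Fin 5))) :
    ∃ g ∈ G, g ≠ 1 ∧ g ∈ Subgroup.center (GL (Fin 2) (ZMod p)) := by
  by_contra hcon
  push_neg at hcon
  set f := QuotientGroup.mk' (Subgroup.center (GL (Fin 2) (ZMod p))) with hfdef
  have hcen : ∀ g ∈ G, g ∈ Subgroup.center (GL (Fin 2) (ZMod p)) → g = 1 := by
    intro g hg hgc
    by_contra h1
    exact hcon g hg h1 hgc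
  -- Klein pair in the image
  obtain ⟨u, v, huu, hvv, hcm, hu1, hv1, huv1⟩ :
      ∃ u v : ↥(G.map f), u * u = 1 ∧ v * v = 1 ∧ u * v = v * u ∧
        u ≠ 1 ∧ v ≠ 1 ∧ u * v ≠ 1 := by
    rcases hima with ⟨⟨e⟩⟩ | ⟨⟨e⟩⟩ | ⟨⟨e⟩⟩
    · obtain ⟨h1, h2, h3, h4, h5, h6⟩ := a4_facts
      exact exists_klein e h1 h2 h3 h4 h5 h6
    · obtain ⟨h1, h2, h3, h4, h5, h6⟩ := s4_facts
      exact exists_klein e h1 h2 h3 h4 h5 h6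
    · obtain ⟨h1, h2, h3, h4, h5, h6⟩ := a5_facts
      exact exists_klein e h1 h2 h3 h4 h5 h6
  -- p is odd
  have h2G : 2 ∣ Nat.card G := by
    have ho : orderOf u = 2 := orderOf_eq_prime (by rw [pow_two]; exact huu) hu1
    have h2Q : 2 ∣ Nat.card ↥(G.map f) := by
      have := orderOf_dvd_natCard u
      rwa [ho] at this
    exact h2Q.trans (Subgroup.card_dvd_of_surjective (f.subgroupMap G)
      (f.subgroupMap_surjective G))
  have hp2 : p ≠ 2 := fun h => hord (h ▸ h2G)
  have htwo : (2 : ZMod p) ≠ 0 := by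
    intro h
    have h2' : ((2 : ℕ) : ZMod p) = 0 := by exact_mod_cast h
    have := (ZMod.natCast_eq_zero_iff 2 p).mp h2'
    exact hp2 ((Nat.prime_dvd_prime_iff_eq (Fact.out) Nat.prime_two).mp this)
  have hneg1ne : (-1 : GL (Fin 2) (ZMod p)) ≠ 1 := by
    intro h
    apply htwo
    have := congrArg (fun u : GL (Fin 2) (ZMod p) => u.val 0 0) h
    simp at this
    linear_combination -this
  have hnegc : (-1 : GL (Fin 2) (ZMod p)) ∈ Subgroup.center (GL (Fin 2) (ZMod p)) := by
    rw [Subgroup.mem_center_iff]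
    intro g
    ext
    simp
  -- lift u, v to G
  obtain ⟨a, haG, hfa⟩ := Subgroup.mem_map.mp u.2
  obtain ⟨b, hbG, hfb⟩ := Subgroup.mem_map.mp v.2
  have key : ∀ g ∈ G, f g = 1 → g = 1 := by
    intro g hg h1
    apply hcen g hg
    have : g ∈ f.ker := MonoidHom.mem_ker.mpr h1
    rwa [hfdef, QuotientGroup.ker_mk'] at this
  have huu' : (u : GL (Fin 2) (ZMod p) ⧸ Subgroup.center (GL (Fin 2) (ZMod p))) * u = 1 := by
    exact_mod_cast congrArg Subtype.val huu
  have hvv' : (v : GL (Fin 2) (ZMod p) ⧸ Subgroup.center (GL (Fin 2) (ZMod p))) * v = 1 := by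
    exact_mod_cast congrArg Subtype.val hvv
  have hcm' : (u : GL (Fin 2) (ZMod p) ⧸ Subgroup.center (GL (Fin 2) (ZMod p))) * v = v * u := by
    exact_mod_cast congrArg Subtype.val hcm
  have haa : a * a = 1 := key _ (mul_mem haG haG) (by rw [_root_.map_mul, hfa, huu'])
  have hbb : b * b = 1 := key _ (mul_mem hbG hbG) (by rw [_root_.map_mul, hfb, hvv'])
  have hcomm : a * b = b * a := by
    have h := key ((a * b) * (b * a)⁻¹)
      (mul_mem (mul_mem haG hbG) (inv_mem (mul_mem hbG haG)))
      (by rw [_root_.map_mul, _root_.map_inv, _root_.map_mul, _root_.map_mul, hfa, hfb, hcm']; group)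
    exact mul_inv_eq_one.mp h
  have ha1 : a ≠ 1 := by
    intro h
    apply hu1
    apply Subtype.ext
    rw [Subgroup.coe_one, ← hfa, h, _root_.map_one]
  have hb1 : b ≠ 1 := by
    intro h
    apply hv1
    apply Subtype.ext
    rw [Subgroup.coe_one, ← hfb, h, _root_.map_one]
  have hab1 : a * b ≠ 1 := by
    intro h
    apply huv1
    apply Subtype.ext
    rw [Subgroup.coe_mul, Subgroup.coe_one, ← hfa, ← hfb, ← _root_.map_mul, h, _root_.map_one]
  have ha1' : a ≠ -1 := by
    intro h
    have hac : a ∈ Subgroup.center (GL (Fin 2) (ZMod p)) := h ▸ hnegc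
    have := hcen a haG hac
    rw [this] at h
    exact hneg1ne h.symm
  have hb1' : b ≠ -1 := by
    intro h
    have hbc : b ∈ Subgroup.center (GL (Fin 2) (ZMod p)) := h ▸ hnegc
    have := hcen b hbG hbc
    rw [this] at h
    exact hneg1ne h.symm
  have hab1' : a * b ≠ -1 := by
    intro h
    have habc : a * b ∈ Subgroup.center (GL (Fin 2) (ZMod p)) := h ▸ hnegc
    have := hcen _ (mul_mem haG hbG) habc
    rw [this] at h
    exact hneg1ne h.symm
  -- pass to matrices
  refine klein_matrix htwo (a := a.val) (b := b.val) ?_ ?_ ?_ ?_ ?_ ?_ ?_ ?_ ?_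
  · have := congrArg Units.val haa; simpa using this
  · have := congrArg Units.val hbb; simpa using this
  · have := congrArg Units.val hcomm; simpa using this
  · exact fun h => ha1 (Units.ext (by simpa using h))
  · exact fun h => ha1' (Units.ext (by simpa using h))
  · exact fun h => hb1 (Units.ext (by simpa using h))
  · exact fun h => hb1' (Units.ext (by simpa using h))
  · exact fun h => hab1 (Units.ext (by simpa using h))
  · exact fun h => hab1' (Units.ext (by simpa using h))
end

section
/- Let $R = \mathbb{Z}_3[\zeta_3]$ and $U^1_R = 1 + (\zeta_3 - 1)R$ the group of $1$-units. Then the natural map $U^1_R / (U^1_R)^3 \to (R/9R)^\ast$ is injective, and $U^1_R / (U^1_R)^3$ has exactly $27$ elements. -/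
open Polynomial

/-- The ring `ℤ₃[ζ₃]`, realized as `ℤ₃[X]/(X² + X + 1)`. -/
noncomputable abbrev R3 : Type := AdjoinRoot (X ^ 2 + X + 1 : ℤ_[3][X])

/-- A primitive cube root of unity `ζ₃` in `ℤ₃[ζ₃]`. -/
noncomputable abbrev zeta3 : R3 := AdjoinRoot.root _

/-- The group `U¹ = 1 + (ζ₃ - 1)R` of 1-units of `R = ℤ₃[ζ₃]`. -/
noncomputable def U1 : Subgroup (R3)ˣ where
  carrier := {u | (zeta3 - 1) ∣ ((u : R3) - 1)}
  one_mem' := by simp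
  mul_mem' := by
    rintro a b ⟨x, hx⟩ ⟨y, hy⟩
    exact ⟨(a : R3) * y + x, by push_cast; linear_combination (a : R3) * hy + hx⟩
  inv_mem' := by
    rintro a ⟨x, hx⟩
    refine ⟨-((a⁻¹ : R3ˣ) : R3) * x, ?_⟩
    have h : ((a⁻¹ : R3ˣ) : R3) * ((a : R3ˣ) : R3) = 1 := by
      rw [← Units.val_mul, inv_mul_cancel, Units.val_one]
    linear_combination (-(((a⁻¹ : R3ˣ) : R3))) * hx + h

/-- The subgroup of cubes of 1-units. -/
noncomputable def U1cubes : Subgroup (R3)ˣ :=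
  (U1.map (powMonoidHom 3)) ⊓ U1

/-- The reduction map `R₃ˣ → (R/9R)ˣ`. -/
noncomputable def red9 : (R3)ˣ →* (R3 ⧸ Ideal.span ({9} : Set R3))ˣ :=
  Units.map (Ideal.Quotient.mk (Ideal.span ({9} : Set R3))).toMonoidHom

/-! ### Auxiliary lemmas -/

lemma hmonic : (X ^ 2 + X + 1 : ℤ_[3][X]).Monic := by monicity!

lemma zeta_rel : zeta3 ^ 2 + zeta3 + 1 = 0 := by
  have := AdjoinRoot.eval₂_root (X ^ 2 + X + 1 : ℤ_[3][X])
  simpa using this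

/-- The power basis `1, ζ₃` of `R3` over `ℤ_[3]`. -/
noncomputable def pb : PowerBasis ℤ_[3] R3 := AdjoinRoot.powerBasis' hmonic

lemma smul_eq_mul3 (n : ℕ) (y : R3) : ((3:ℤ_[3])^n) • y = (3:R3)^n * y := by
  rw [Algebra.smul_def, map_pow, map_ofNat]

lemma dvd_coords (n : ℕ) (x : R3) :
    (3:R3)^n ∣ x ↔ ∀ i, (3:ℤ_[3])^n ∣ pb.basis.repr x i := by
  constructor
  · rintro ⟨y, rfl⟩ i
    rw [← smul_eq_mul3, map_smul]
    exact ⟨pb.basis.repr y i, rfl⟩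
  · intro h
    choose d hd using h
    refine ⟨∑ i, d i • pb.basis i, ?_⟩
    rw [Finset.mul_sum]
    calc x = ∑ i, pb.basis.repr x i • pb.basis i := (pb.basis.sum_repr x).symm
    _ = ∑ i, (3:R3)^n * (d i • pb.basis i) := by
        refine Finset.sum_congr rfl fun i _ => ?_
        rw [hd i, mul_smul, smul_eq_mul3]

lemma padic_smod (n : ℕ) (a b : ℤ_[3]) :
    a ≡ b [SMOD ((IsLocalRing.maximalIdeal ℤ_[3]) ^ n • ⊤ : Submodule ℤ_[3] ℤ_[3])] ↔
      (3 : ℤ_[3]) ^ n ∣ a - b := by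
  rw [SModEq.sub_mem]
  simp only [← Ideal.one_eq_top, smul_eq_mul, mul_one, PadicInt.maximalIdeal_eq_span_p,
    Ideal.span_singleton_pow, Ideal.mem_span_singleton, Nat.cast_ofNat]

lemma padic_haus (a : ℤ_[3]) (h : ∀ n : ℕ, (3:ℤ_[3])^n ∣ a) : a = 0 := by
  refine IsHausdorff.haus
    (inferInstance : IsAdicComplete (IsLocalRing.maximalIdeal ℤ_[3]) ℤ_[3]).toIsHausdorff a
    fun n => ?_
  rw [padic_smod]
  simpa using h n

lemma padic_lim (f : ℕ → ℤ_[3]) (h : ∀ m n, m ≤ n → (3:ℤ_[3])^m ∣ f n - f m) :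
    ∃ L, ∀ n, (3:ℤ_[3])^n ∣ L - f n := by
  have key : ∀ {m n : ℕ}, m ≤ n →
      f m ≡ f n [SMOD ((IsLocalRing.maximalIdeal ℤ_[3]) ^ m • ⊤ : Submodule ℤ_[3] ℤ_[3])] := by
    intro m n hmn
    rw [padic_smod]
    exact (dvd_sub_comm).1 (h m n hmn)
  obtain ⟨L, hL⟩ := IsPrecomplete.prec
    (inferInstance : IsAdicComplete (IsLocalRing.maximalIdeal ℤ_[3]) ℤ_[3]).toIsPrecomplete key
  exact ⟨L, fun n => (dvd_sub_comm).1 ((padic_smod n (f n) L).1 (hL n))⟩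

lemma haus3 (x : R3) (h : ∀ n : ℕ, (3:R3)^n ∣ x) : x = 0 := by
  have : pb.basis.repr x = 0 := by
    ext i
    exact padic_haus _ fun n => (dvd_coords n x).1 (h n) i
  simpa using congrArg pb.basis.repr.symm this

lemma lim3 (w : ℕ → R3) (h : ∀ n, (3:R3)^n ∣ w (n+1) - w n) :
    ∃ W, ∀ n, (3:R3)^n ∣ W - w n := by
  have key : ∀ m n, m ≤ n → (3:R3)^m ∣ w n - w m := by
    intro m n hmn
    induction n with
    | zero => simp [Nat.le_zero.1 hmn]
    | succ k ih =>
      rcases Nat.lt_or_ge m (k+1) with hm | hm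
      · have h1 := ih (Nat.lt_succ_iff.1 hm)
        have h2 : (3:R3)^m ∣ w (k+1) - w k :=
          dvd_trans (pow_dvd_pow _ (Nat.lt_succ_iff.1 hm)) (h k)
        have := dvd_add h2 h1
        simpa using this
      · have : m = k + 1 := le_antisymm hmn hm
        simp [this]
  choose L hL using fun i => padic_lim (fun n => pb.basis.repr (w n) i)
    (fun m n hmn => by
      have := (dvd_coords m (w n - w m)).1 (key m n hmn) i
      simpa using this)
  refine ⟨pb.basis.repr.symm (Finsupp.equivFunOnFinite.symm L), fun n => ?_⟩
  rw [dvd_coords]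
  intro i
  rw [map_sub, pb.basis.repr.apply_symm_apply]
  simpa using hL i n

lemma pi_dvd_three : (zeta3 - 1) ∣ (3:R3) :=
  ⟨-(zeta3-1)*zeta3^2, by linear_combination (3 - 3*zeta3 + zeta3^2) * zeta_rel⟩

lemma cube_root (s : R3) : ∃ W : R3, W + 3*W^2 + 3*W^3 = s := by
  set w : ℕ → R3 := fun n => Nat.rec s (fun _ wn => s - 3*wn^2 - 3*wn^3) n with hw
  have hstep : ∀ n, w (n+1) = s - 3*(w n)^2 - 3*(w n)^3 := fun n => rfl
  have hc : ∀ n, (3:R3)^n ∣ w (n+1) - w n := by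
    intro n
    induction n with
    | zero => simp
    | succ k ih =>
      obtain ⟨d, hd⟩ := ih
      refine ⟨d * (-(w (k+1) + w k) - ((w (k+1))^2 + w (k+1) * w k + (w k)^2)), ?_⟩
      have e1 : w (k+1) = s - 3*(w k)^2 - 3*(w k)^3 := hstep k
      have e2 : w (k+2) = s - 3*(w (k+1))^2 - 3*(w (k+1))^3 := hstep (k+1)
      linear_combination e2 - e1 +
        ((-3)*(w (k+1) + w k) - 3*((w (k+1))^2 + w (k+1)*(w k) + (w k)^2)) * hd
  obtain ⟨W, hW⟩ := lim3 w hc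
  refine ⟨W, ?_⟩
  have hE : ∀ n, (3:R3)^n ∣ (W + 3*W^2 + 3*W^3 - s) := by
    intro n
    obtain ⟨d, hd⟩ := hW n
    obtain ⟨e, he⟩ := hc n
    have e1 : w (n+1) = s - 3*(w n)^2 - 3*(w n)^3 := hstep n
    refine ⟨d*(1 + 3*(W + w n) + 3*(W^2 + W*(w n) + (w n)^2)) - e, ?_⟩
    linear_combination (1 + 3*(W + w n) + 3*(W^2 + W*(w n) + (w n)^2)) * hd - he + e1
  have h0 := haus3 _ hE
  linear_combination h0

lemma isUnit_one_add_three (z : R3) : IsUnit (1 + 3*z) := by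
  have hc : ∀ n, (3:R3)^n ∣ (∑ i ∈ Finset.range (n+1), (-(3*z))^i)
      - ∑ i ∈ Finset.range n, (-(3*z))^i := by
    intro n
    refine ⟨(-z)^n, ?_⟩
    have hpow : (-(3*z))^n = 3^n * (-z)^n := by
      rw [show (-(3*z)) = 3*(-z) by ring, mul_pow]
    rw [Finset.sum_range_succ]
    linear_combination hpow
  obtain ⟨S, hS⟩ := lim3 (fun n => ∑ i ∈ Finset.range n, (-(3*z))^i) hc
  have key : (1 + 3*z) * S - 1 = 0 := by
    refine haus3 _ fun n => ?_
    obtain ⟨d, hd⟩ := hS n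
    have hg := geom_sum_mul (-(3*z)) n
    have hpow : (-(3*z))^n = 3^n * (-z)^n := by
      rw [show (-(3*z)) = 3*(-z) by ring, mul_pow]
    refine ⟨(1+3*z)*d - (-z)^n, ?_⟩
    linear_combination (1+3*z)*hd - hg - hpow
  exact IsUnit.of_mul_eq_one S (by linear_combination key)

lemma isUnit_one_add_pi (y : R3) : IsUnit (1 + (zeta3-1)*y) := by
  have h := isUnit_one_add_three (zeta3 * y^2)
  have key : (1 + (zeta3-1)*y) * (1 - (zeta3-1)*y) = 1 + 3*(zeta3*y^2) := by
    linear_combination (-(y^2)) * zeta_rel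
  rw [← key] at h
  exact isUnit_of_mul_isUnit_left h

lemma three_cancel (x : R3) (h : 3 * x = 0) : x = 0 := by
  have h1 : pb.basis.repr x = 0 := by
    ext i
    have h2 : ((3:ℤ_[3])^1) • x = 0 := by rw [smul_eq_mul3]; simpa using h
    have h3 := congrArg (fun y => pb.basis.repr y i) h2
    simp only [map_smul, map_zero] at h3
    have h4 : (3:ℤ_[3])^1 * pb.basis.repr x i = 0 := h3
    simpa using h4
  simpa using congrArg pb.basis.repr.symm h1

lemma pi_cancel (x : R3) (h : (zeta3-1) * x = 0) : x = 0 := by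
  have h2 : (zeta3-1)^2 * x = 0 := by linear_combination (zeta3 - 1) * h
  have h3 : 3 * (zeta3 * x) = 0 := by linear_combination (-1) * h2 + x * zeta_rel
  have h4 : zeta3 * x = 0 := three_cancel _ h3
  linear_combination zeta3^2 * h4 + (-(x*(zeta3-1))) * zeta_rel

lemma chi_rel : (X ^ 2 + X + 1 : ℤ_[3][X]).eval₂ PadicInt.toZMod (1 : ZMod 3) = 0 := by
  simp only [eval₂_add, eval₂_pow, eval₂_X, eval₂_one, one_pow]
  decide

/-- The residue character `R3 → 𝔽₃`. -/
noncomputable def χ : R3 →+* ZMod 3 := AdjoinRoot.lift PadicInt.toZMod 1 chi_rel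

lemma chi_zeta : χ zeta3 = 1 := AdjoinRoot.lift_root chi_rel

lemma chi_alg (c : ℤ_[3]) : χ (algebraMap ℤ_[3] R3 c) = PadicInt.toZMod c := by
  rw [AdjoinRoot.algebraMap_eq]
  exact AdjoinRoot.lift_of chi_rel

lemma padic_three_dvd (c : ℤ_[3]) (h : PadicInt.toZMod c = 0) : (3:ℤ_[3]) ∣ c := by
  have h1 : c ∈ RingHom.ker (PadicInt.toZMod : ℤ_[3] →+* ZMod 3) := h
  rw [PadicInt.ker_toZMod, PadicInt.maximalIdeal_eq_span_p, Ideal.mem_span_singleton] at h1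
  simpa using h1

lemma cube_sub_self (c : ℤ_[3]) : (3:ℤ_[3]) ∣ c^3 - c := by
  refine padic_three_dvd _ ?_
  rw [map_sub, map_pow]
  have : ∀ r : ZMod 3, r^3 - r = 0 := by decide
  exact this _

lemma residue (x : R3) : ∃ c : ℤ_[3], (zeta3 - 1) ∣ x - algebraMap ℤ_[3] R3 c := by
  induction x using AdjoinRoot.induction_on with
  | ih p =>
    refine ⟨p.eval 1, ?_⟩
    have h1 : AdjoinRoot.mk _ p = aeval zeta3 p := (AdjoinRoot.aeval_eq p).symm
    have h2 : algebraMap ℤ_[3] R3 (p.eval 1) = (p.map (algebraMap ℤ_[3] R3)).eval 1 := by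
      rw [eval_map, eval₂_at_one]
    rw [h1, aeval_def, ← eval_map, h2]
    exact sub_dvd_eval_sub zeta3 1 (p.map (algebraMap ℤ_[3] R3))

lemma ker_chi (t : R3) (h : χ t = 0) : (zeta3 - 1) ∣ t := by
  obtain ⟨c, s, hs⟩ := residue t
  have hpi : χ (zeta3 - 1) = 0 := by rw [map_sub, chi_zeta, map_one, sub_self]
  have h1 : PadicInt.toZMod c = 0 := by
    have := congrArg χ hs
    rw [map_sub, map_mul, hpi, zero_mul, h, zero_sub, chi_alg] at this
    exact neg_eq_zero.1 this
  obtain ⟨c', hc'⟩ := padic_three_dvd c h1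
  obtain ⟨e, he⟩ := pi_dvd_three
  refine ⟨s + e * algebraMap ℤ_[3] R3 c', ?_⟩
  have hmap : algebraMap ℤ_[3] R3 c = 3 * algebraMap ℤ_[3] R3 c' := by
    rw [hc', map_mul, map_ofNat]
  linear_combination hs + hmap + (algebraMap ℤ_[3] R3 c') * he

lemma pi_dvd_cube (x : R3) : (zeta3 - 1) ∣ x^3 - x := by
  obtain ⟨c, t, ht⟩ := residue x
  obtain ⟨d, hd⟩ := cube_sub_self c
  obtain ⟨e, he⟩ := pi_dvd_three
  set C := algebraMap ℤ_[3] R3 c with hC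
  set D := algebraMap ℤ_[3] R3 d with hD
  have hd' : C^3 - C = 3 * D := by
    rw [hC, hD, ← map_pow, ← map_sub, hd, map_mul, map_ofNat]
  refine ⟨t*(x^2 + x*C + C^2) - t + e * D, ?_⟩
  linear_combination (x^2 + x*C + C^2) * ht - ht + hd' + D * he

lemma cube_val (x : R3) : (9:R3) ∣ (1 + (zeta3-1)*x)^3 - 1 := by
  obtain ⟨y, hy⟩ := pi_dvd_cube x
  exact ⟨zeta3*x - zeta3*x^2 - (zeta3+1)*y,
    by linear_combination (3 + 6*zeta3)*hy + (6*y + 3*x^2 - 4*x^3 + zeta3*x^3) * zeta_rel⟩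

lemma red9_one_iff (u : R3ˣ) : red9 u = 1 ↔ (9:R3) ∣ ((u : R3) - 1) := by
  have hmk : ((1 : R3 ⧸ Ideal.span ({9} : Set R3)))
      = Ideal.Quotient.mk (Ideal.span ({9} : Set R3)) 1 := rfl
  constructor
  · intro h
    have h1 : (Ideal.Quotient.mk (Ideal.span ({9} : Set R3))) (u : R3) = 1 := congrArg Units.val h
    rw [hmk, Ideal.Quotient.mk_eq_mk_iff_sub_mem, Ideal.mem_span_singleton] at h1
    exact h1
  · intro h
    refine Units.ext ?_
    show (Ideal.Quotient.mk (Ideal.span ({9} : Set R3))) (u : R3) = 1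
    rw [hmk, Ideal.Quotient.mk_eq_mk_iff_sub_mem, Ideal.mem_span_singleton]
    exact h

lemma part1 (u : R3ˣ) (hu : u ∈ U1) : red9 u = 1 ↔ ∃ v ∈ U1, v ^ 3 = u := by
  rw [red9_one_iff]
  constructor
  · rintro ⟨s, hs⟩
    obtain ⟨W, hW⟩ := cube_root s
    have hv3 : (1 + 3*W)^3 = (u : R3) := by linear_combination 9*hW - hs
    have hv : IsUnit (1 + 3*W) := IsUnit.of_mul_eq_one ((1+3*W)^2 * ↑u⁻¹) (by
      calc (1+3*W) * ((1+3*W)^2 * ↑u⁻¹) = (1+3*W)^3 * ↑u⁻¹ := by ring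
      _ = (u : R3) * ↑u⁻¹ := by rw [hv3]
      _ = 1 := u.mul_inv)
    refine ⟨hv.unit, ?_, ?_⟩
    · show (zeta3 - 1) ∣ ((hv.unit : R3) - 1)
      rw [hv.unit_spec]
      obtain ⟨e, he⟩ := pi_dvd_three
      exact ⟨e*W, by linear_combination W * he⟩
    · exact Units.ext (by rw [Units.val_pow_eq_pow_val, IsUnit.unit_spec, hv3])
  · rintro ⟨v, hv1, rfl⟩
    obtain ⟨x, hx⟩ := hv1
    have hval : (v : R3) = 1 + (zeta3-1)*x := by linear_combination hx
    have h9 := cube_val x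
    rw [Units.val_pow_eq_pow_val, hval]
    exact h9

/-! ### Counting -/

lemma nine_eq : (9:R3) = zeta3 * (zeta3-1)^4 := by
  linear_combination (9 - 10*zeta3 + 5*zeta3^2 - zeta3^3) * zeta_rel

lemma pi4_eq : ((zeta3-1):R3)^4 = 9 * zeta3^2 := by
  linear_combination (1 - 5*zeta3 + zeta3^2) * zeta_rel

/-- Lift of `𝔽₃` into `R3`. -/
noncomputable def zl : ZMod 3 → R3 := fun a => algebraMap ℤ_[3] R3 ((a.val : ℕ) : ℤ_[3])

lemma chi_zl (a : ZMod 3) : χ (zl a) = a := by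
  rw [zl, chi_alg, map_natCast]
  exact ZMod.natCast_rightInverse a

lemma chi_step (t : R3) : ∃ t', t = zl (χ t) + (zeta3 - 1) * t' := by
  have h : χ (t - zl (χ t)) = 0 := by rw [map_sub, chi_zl, sub_self]
  obtain ⟨t', ht'⟩ := ker_chi _ h
  exact ⟨t', by linear_combination ht'⟩

lemma decomp (t : R3) : ∃ (a b c : ZMod 3) (r : R3),
    t = zl a + (zeta3-1) * zl b + (zeta3-1)^2 * zl c + (zeta3-1)^3 * r := by
  obtain ⟨t1, h1⟩ := chi_step t
  obtain ⟨t2, h2⟩ := chi_step t1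
  obtain ⟨t3, h3⟩ := chi_step t2
  exact ⟨χ t, χ t1, χ t2, t3,
    by linear_combination h1 + (zeta3-1) * h2 + (zeta3-1)^2 * h3⟩

/-- The natural map `U¹/(U¹)³ → (R/9R)ˣ` is injective (i.e. a 1-unit maps to `1` mod `9`
iff it is a cube of a 1-unit), and `U¹/(U¹)³` has exactly `27` elements. -/
theorem stmt_10 :
    (∀ u : (R3)ˣ, u ∈ U1 → (red9 u = 1 ↔ ∃ v ∈ U1, v ^ 3 = u)) ∧
    Nat.card (U1 ⧸ (U1cubes.subgroupOf U1)) = 27 := by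
  refine ⟨part1, ?_⟩
  classical
  set φ : U1 →* (R3 ⧸ Ideal.span ({9} : Set R3))ˣ := red9.comp U1.subtype with hφ
  have hker : φ.ker = U1cubes.subgroupOf U1 := by
    ext u
    rw [MonoidHom.mem_ker, Subgroup.mem_subgroupOf]
    have heq : φ u = red9 ↑u := rfl
    rw [heq, part1 ↑u u.2]
    constructor
    · rintro ⟨v, hv, hv3⟩
      exact Subgroup.mem_inf.2 ⟨Subgroup.mem_map.2 ⟨v, hv, hv3⟩, u.2⟩
    · intro h
      obtain ⟨v, hv, hv3⟩ := Subgroup.mem_map.1 (Subgroup.mem_inf.1 h).1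
      exact ⟨v, hv, hv3⟩
  have h1 : Nat.card (U1 ⧸ (U1cubes.subgroupOf U1)) = Nat.card φ.range := by
    rw [← hker]
    exact Nat.card_congr (QuotientGroup.quotientKerEquivRange φ).toEquiv
  have unit1p : ∀ t : R3, ∃ u : R3ˣ, ((u : R3) = 1 + (zeta3-1)*t ∧ u ∈ U1) := by
    intro t
    obtain ⟨u, hu⟩ := isUnit_one_add_pi t
    exact ⟨u, hu, ⟨t, by rw [hu]; ring⟩⟩
  set T : ZMod 3 × ZMod 3 × ZMod 3 → R3 := fun a =>
    zl a.1 + (zeta3-1) * zl a.2.1 + (zeta3-1)^2 * zl a.2.2 with hT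
  have hGmem : ∀ a, red9 (unit1p (T a)).choose ∈ φ.range := fun a =>
    ⟨⟨_, (unit1p (T a)).choose_spec.2⟩, rfl⟩
  set G : ZMod 3 × ZMod 3 × ZMod 3 → φ.range := fun a => ⟨red9 (unit1p (T a)).choose, hGmem a⟩
    with hG
  have hpi : χ (zeta3 - 1) = 0 := by rw [map_sub, chi_zeta, map_one, sub_self]
  have peel : ∀ (x y : ZMod 3) (w v : R3),
      zl x - zl y + (zeta3-1) * w = (zeta3-1) * v → x = y ∧ w = v := by
    intro x y w v h
    have hx : x = y := by
      have := congrArg χ h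
      simpa [map_add, map_sub, map_mul, chi_zl, hpi, sub_eq_zero] using this
    refine ⟨hx, ?_⟩
    have hz : zl x = zl y := by rw [hx]
    have h0 : (zeta3-1) * (w - v) = 0 := by linear_combination h - hz
    exact sub_eq_zero.1 (pi_cancel _ h0)
  have hGinj : Function.Injective G := by
    intro a b hab
    have h1' : red9 (unit1p (T a)).choose = red9 (unit1p (T b)).choose :=
      congrArg Subtype.val hab
    have h2 : Ideal.Quotient.mk (Ideal.span ({9} : Set R3)) ((unit1p (T a)).choose : R3)
        = Ideal.Quotient.mk (Ideal.span ({9} : Set R3)) ((unit1p (T b)).choose : R3) :=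
      congrArg Units.val h1'
    rw [(unit1p (T a)).choose_spec.1, (unit1p (T b)).choose_spec.1,
      Ideal.Quotient.mk_eq_mk_iff_sub_mem, Ideal.mem_span_singleton] at h2
    obtain ⟨r, hr⟩ := h2
    have h3 : (zeta3-1) * ((T a - T b) - (zeta3-1)^3 * (zeta3 * r)) = 0 := by
      linear_combination hr + r * nine_eq
    have h4 : T a - T b = (zeta3-1)^3 * (zeta3 * r) := by
      have := pi_cancel _ h3
      linear_combination this
    have hTab : T a - T b = (zl a.1 - zl b.1) + (zeta3-1)*(zl a.2.1 - zl b.2.1)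
        + (zeta3-1)^2*(zl a.2.2 - zl b.2.2) := by
      simp only [hT]
      ring
    have s1 : zl a.1 - zl b.1 + (zeta3-1) * ((zl a.2.1 - zl b.2.1)
        + (zeta3-1)*(zl a.2.2 - zl b.2.2)) = (zeta3-1) * ((zeta3-1)^2 * (zeta3*r)) := by
      linear_combination h4 - hTab
    obtain ⟨c1, s2⟩ := peel _ _ _ _ s1
    have s2' : zl a.2.1 - zl b.2.1 + (zeta3-1) * (zl a.2.2 - zl b.2.2)
        = (zeta3-1) * ((zeta3-1) * (zeta3*r)) := by linear_combination s2
    obtain ⟨c2, s3⟩ := peel _ _ _ _ s2'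
    have s3' : zl a.2.2 - zl b.2.2 + (zeta3-1) * 0 = (zeta3-1) * (zeta3*r) := by
      linear_combination s3
    obtain ⟨c3, -⟩ := peel _ _ _ _ s3'
    exact Prod.ext c1 (Prod.ext c2 c3)
  have hGsurj : Function.Surjective G := by
    rintro ⟨x, u, rfl⟩
    obtain ⟨t, ht⟩ := u.2
    obtain ⟨a, b, c, r, hr⟩ := decomp t
    refine ⟨(a, b, c), ?_⟩
    apply Subtype.ext
    show red9 (unit1p (T (a,b,c))).choose = φ u
    apply Units.ext
    show Ideal.Quotient.mk (Ideal.span ({9} : Set R3)) ((unit1p (T (a,b,c))).choose : R3)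
      = Ideal.Quotient.mk (Ideal.span ({9} : Set R3)) ((u : R3ˣ) : R3)
    rw [(unit1p _).choose_spec.1, Ideal.Quotient.mk_eq_mk_iff_sub_mem, Ideal.mem_span_singleton]
    refine ⟨-(zeta3^2 * r), ?_⟩
    simp only [hT]
    linear_combination -ht - (zeta3-1)*hr - r*pi4_eq
  have h2 := Nat.card_congr (Equiv.ofBijective G ⟨hGinj, hGsurj⟩)
  rw [h1, ← h2]
  simp [Nat.card_prod, Nat.card_zmod]
end

section
/- There exists an abelian group $M$ with $\mathrm{div}(M) \neq \mathrm{Div}(M)$: namely, for an integer $d \geq 2$, let $M$ be the quotient of $\bigoplus_{n \geq 1} \frac{1}{dn}\mathbb{Z}/\mathbb{Z}$ by the kernel of the summation map $\bigoplus_{n \geq 1} \frac{1}{d}\mathbb{Z}/\mathbb{Z} \to \frac{1}{d}\mathbb{Z}/\mathbb{Z}$. Then $\mathrm{div}(M) \cong \frac{1}{d}\mathbb{Z}/\mathbb{Z}$ (in particular non-trivial) while $\mathrm{Div}(M) = 0$. -/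
/-- The cyclic subgroup `(1/m)ℤ/ℤ` of `ℚ/ℤ`. -/
def cyc (m : ℕ) : AddSubgroup (AddCircle (1 : ℚ)) :=
  AddSubgroup.zmultiples ((((m : ℚ)⁻¹ : ℚ) : AddCircle (1 : ℚ)))

/-- The direct sum `⊕_{n ≥ 1} (1/(dn))ℤ/ℤ`. -/
abbrev bigSum (d : ℕ) : Type := Π₀ n : ℕ+, ↥(cyc (d * n))

/-- Summation of all the components, as a map to `ℚ/ℤ`. -/
noncomputable def sumHom (d : ℕ) : bigSum d →+ AddCircle (1 : ℚ) :=
  DFinsupp.sumAddHom (fun n => (cyc (d * n)).subtype)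

/-- The kernel of the summation map `⊕_n (1/d)ℤ/ℤ → (1/d)ℤ/ℤ`, viewed inside
`⊕_n (1/(dn))ℤ/ℤ`: elements all of whose components lie in `(1/d)ℤ/ℤ` and whose
components sum to zero. -/
noncomputable def sumKer (d : ℕ) : AddSubgroup (bigSum d) where
  carrier := {a | (∀ n : ℕ+, ((a n : AddCircle (1 : ℚ)) ∈ cyc d)) ∧ sumHom d a = 0}
  zero_mem' := by
    constructor
    · intro n
      simp [AddSubgroup.zero_mem]
    · simp [map_zero]
  add_mem' := by
    rintro a b ⟨ha1, ha2⟩ ⟨hb1, hb2⟩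
    constructor
    · intro n
      simpa using (cyc d).add_mem (ha1 n) (hb1 n)
    · rw [map_add, ha2, hb2, add_zero]
  neg_mem' := by
    rintro a ⟨ha1, ha2⟩
    constructor
    · intro n
      simpa using (cyc d).neg_mem (ha1 n)
    · rw [map_neg, ha2, neg_zero]

/-- The group `M` of the example: the quotient of `⊕_{n≥1} (1/(dn))ℤ/ℤ` by the kernel of
the summation map on `⊕_{n≥1} (1/d)ℤ/ℤ`. -/
noncomputable abbrev exGroup (d : ℕ) : Type := bigSum d ⧸ sumKer d

/-- The subgroup `nM` of an abelian group. -/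
def smulSub (n : ℕ) (M : Type*) [AddCommGroup M] : AddSubgroup M :=
  (AddMonoidHom.mk' (fun x : M => n • x) (fun a b => smul_add n a b)).range

/-- The subgroup `div(M) = ⋂_{n ≥ 1} nM` of divisible elements. -/
def divSub (M : Type*) [AddCommGroup M] : AddSubgroup M :=
  ⨅ n : ℕ+, smulSub n M

/-- The maximal divisible subgroup `Div(M) = ∑_{φ : ℚ → M} im(φ)`. -/
def DivSub (M : Type*) [AddCommGroup M] : AddSubgroup M :=
  ⨆ φ : ℚ →+ M, φ.range

namespace Aux13

open AddSubgroup

lemma mem_cyc {m : ℕ} {x : AddCircle (1:ℚ)} :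
    x ∈ cyc m ↔ ∃ k : ℤ, (((k : ℚ) * (m:ℚ)⁻¹ : ℚ) : AddCircle (1:ℚ)) = x := by
  simp_rw [cyc, AddSubgroup.mem_zmultiples_iff, ← AddCircle.coe_zsmul, zsmul_eq_mul]

lemma coe_int_eq_zero (k : ℤ) : (((k:ℚ)) : AddCircle (1:ℚ)) = 0 :=
  (AddCircle.coe_eq_zero_iff 1).mpr ⟨k, by simp⟩

lemma cyc_torsion {d : ℕ} (hd : (d:ℚ) ≠ 0) {x : AddCircle (1:ℚ)} (hx : x ∈ cyc d) :
    d • x = 0 := by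
  obtain ⟨k, rfl⟩ := mem_cyc.mp hx
  rw [← AddCircle.coe_nsmul, nsmul_eq_mul]
  rw [show (d:ℚ) * ((k:ℚ) * (d:ℚ)⁻¹) = (k:ℚ) by field_simp]
  exact coe_int_eq_zero k

lemma nsmul_mem_cyc {d : ℕ} (hd : (d:ℚ) ≠ 0) (n : ℕ+) {x : AddCircle (1:ℚ)}
    (hx : x ∈ cyc (d * n)) : (n:ℕ) • x ∈ cyc d := by
  obtain ⟨k, rfl⟩ := mem_cyc.mp hx
  refine mem_cyc.mpr ⟨k, ?_⟩
  rw [← AddCircle.coe_nsmul, nsmul_eq_mul]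
  congr 1
  have hn : ((n:ℕ):ℚ) ≠ 0 := by exact_mod_cast n.ne_zero
  push_cast
  field_simp

lemma exists_div {d : ℕ} (hd : (d:ℚ) ≠ 0) (n : ℕ+) {x : AddCircle (1:ℚ)} (hx : x ∈ cyc d) :
    ∃ y ∈ cyc (d * n), (n:ℕ) • y = x := by
  obtain ⟨k, rfl⟩ := mem_cyc.mp hx
  refine ⟨(((k:ℚ) * ((d * n : ℕ):ℚ)⁻¹ : ℚ) : AddCircle (1:ℚ)), mem_cyc.mpr ⟨k, rfl⟩, ?_⟩
  rw [← AddCircle.coe_nsmul, nsmul_eq_mul]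
  congr 1
  have hn : ((n:ℕ):ℚ) ≠ 0 := by exact_mod_cast n.ne_zero
  push_cast
  field_simp

/-- Evaluation of the `n`-th component, in `ℚ/ℤ`, as an additive hom. -/
noncomputable def coeEval (d : ℕ) (n : ℕ+) : bigSum d →+ AddCircle (1:ℚ) :=
  ((cyc (d * n)).subtype).comp (DFinsupp.evalAddMonoidHom n)

lemma coeEval_apply (d : ℕ) (n : ℕ+) (a : bigSum d) :
    coeEval d n a = (a n : AddCircle (1:ℚ)) := rfl

lemma mem_sumKer {d : ℕ} {a : bigSum d} :
    a ∈ sumKer d ↔ (∀ n : ℕ+, ((a n : AddCircle (1 : ℚ)) ∈ cyc d)) ∧ sumHom d a = 0 :=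
  Iff.rfl

lemma single_mem_cyc {d : ℕ} (i : ℕ+) (z : ↥(cyc (d * i)))
    (h : (z : AddCircle (1:ℚ)) ∈ cyc d) (m : ℕ+) :
    coeEval d m (DFinsupp.single i z) ∈ cyc d := by
  rw [coeEval_apply]
  rcases eq_or_ne i m with rfl | hne
  · rwa [DFinsupp.single_eq_same]
  · rw [DFinsupp.single_eq_of_ne hne.symm]
    simpa using (cyc d).zero_mem

lemma neg_add_mem_cyc {d : ℕ} {a b : bigSum d} (m : ℕ+)
    (ha : coeEval d m a ∈ cyc d) (hb : coeEval d m b ∈ cyc d) :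
    ((((-a + b : bigSum d)) m : AddCircle (1:ℚ))) ∈ cyc d := by
  rw [← coeEval_apply, map_add, map_neg]
  exact (cyc d).add_mem ((cyc d).neg_mem ha) hb

lemma sumHom_mem {d : ℕ} {a : bigSum d} (h : ∀ n, ((a n : AddCircle (1:ℚ)) ∈ cyc d)) :
    sumHom d a ∈ cyc d := by
  classical
  rw [sumHom, DFinsupp.sumAddHom_apply]
  exact AddSubgroup.sum_mem _ (fun i _ => h i)

lemma sumHom_single {d : ℕ} (i : ℕ+) (z : ↥(cyc (d * i))) :
    sumHom d (DFinsupp.single i z) = (z : AddCircle (1:ℚ)) := by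
  rw [sumHom]
  exact DFinsupp.sumAddHom_single _ _ _

lemma mem_smulSub {M : Type*} [AddCommGroup M] {n : ℕ} {x : M} :
    x ∈ smulSub n M ↔ ∃ y, n • y = x := by
  simp [smulSub, AddMonoidHom.mem_range]

lemma cyc_le_cyc (d : ℕ) : cyc d ≤ cyc (d * ((1:ℕ+):ℕ)) :=
  (congrArg cyc (by simp : d = d * ((1:ℕ+):ℕ))).le

/-- The inclusion `cyc d → cyc (d·1)`, then `single 1`, then projection to the quotient. -/
noncomputable def jmap (d : ℕ) : ↥(cyc d) →+ exGroup d :=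
  (QuotientAddGroup.mk' (sumKer d)).comp
    ((DFinsupp.singleAddHom (fun n : ℕ+ => ↥(cyc (d * (n:ℕ)))) 1).comp
      (AddSubgroup.inclusion (cyc_le_cyc d)))

lemma jmap_apply (d : ℕ) (x : ↥(cyc d)) :
    jmap d x = QuotientAddGroup.mk' (sumKer d)
      (DFinsupp.single 1 (AddSubgroup.inclusion (cyc_le_cyc d) x)) :=
  rfl

lemma jmap_injective (d : ℕ) : Function.Injective (jmap d) := by
  rw [injective_iff_map_eq_zero]
  intro x hx
  rw [jmap_apply, QuotientAddGroup.mk'_apply, QuotientAddGroup.eq_zero_iff] at hx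
  have h2 := (mem_sumKer.mp hx).2
  rw [sumHom_single] at h2
  exact Subtype.ext h2

set_option maxHeartbeats 1600000 in
lemma range_jmap (d : ℕ) (hd : (d:ℚ) ≠ 0) : (jmap d).range = divSub (exGroup d) := by
  apply le_antisymm
  · rintro _ ⟨x, rfl⟩
    rw [divSub, AddSubgroup.mem_iInf]
    intro n
    obtain ⟨y, hy, hny⟩ := exists_div hd n x.2
    refine mem_smulSub.mpr
      ⟨QuotientAddGroup.mk' (sumKer d) (DFinsupp.single n ⟨y, hy⟩), ?_⟩
    rw [← map_nsmul, jmap_apply, QuotientAddGroup.mk'_apply, QuotientAddGroup.mk'_apply,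
      QuotientAddGroup.eq]
    have hz : ((n:ℕ) • (DFinsupp.single n (⟨y, hy⟩ : ↥(cyc (d * (n:ℕ)))) : bigSum d)) =
        DFinsupp.single n ((n:ℕ) • (⟨y, hy⟩ : ↥(cyc (d * (n:ℕ))))) :=
      (map_nsmul (DFinsupp.singleAddHom (fun n : ℕ+ => ↥(cyc (d * (n:ℕ)))) n) _ _).symm
    rw [hz]
    have hsy : (((n:ℕ) • (⟨y, hy⟩ : ↥(cyc (d * (n:ℕ)))) : ↥(cyc (d * (n:ℕ)))) :
        AddCircle (1:ℚ)) ∈ cyc d := by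
      rw [AddSubgroup.coe_nsmul, hny]
      exact x.2
    refine mem_sumKer.mpr ⟨?_, ?_⟩
    · intro m
      exact neg_add_mem_cyc m (single_mem_cyc _ _ hsy m) (single_mem_cyc _ _ x.2 m)
    · rw [map_add, map_neg, sumHom_single, sumHom_single]
      show -(((n:ℕ) • (⟨y, hy⟩ : ↥(cyc (d * (n:ℕ)))) : ↥(cyc (d * (n:ℕ)))) :
        AddCircle (1:ℚ)) + ((AddSubgroup.inclusion (cyc_le_cyc d) x : ↥(cyc (d * ((1:ℕ+):ℕ)))) : AddCircle (1:ℚ)) = 0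
      rw [AddSubgroup.coe_nsmul, hny]
      show -(x : AddCircle (1:ℚ)) + (x : AddCircle (1:ℚ)) = 0
      rw [neg_add_cancel]
  · intro c hc
    obtain ⟨a, rfl⟩ := QuotientAddGroup.mk'_surjective (sumKer d) c
    have hcomp : ∀ m : ℕ+, ((a m : AddCircle (1:ℚ)) ∈ cyc d) := by
      intro m
      obtain ⟨c', hc'⟩ := mem_smulSub.mp ((AddSubgroup.mem_iInf.mp hc) m)
      obtain ⟨b, rfl⟩ := QuotientAddGroup.mk'_surjective (sumKer d) c'
      rw [← map_nsmul, QuotientAddGroup.mk'_apply, QuotientAddGroup.mk'_apply,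
        QuotientAddGroup.eq] at hc'
      have h1 : coeEval d m (-((m:ℕ) • b) + a) ∈ cyc d := by
        rw [coeEval_apply]
        exact (mem_sumKer.mp hc').1 m
      have e2 : (a m : AddCircle (1:ℚ)) =
          coeEval d m (-((m:ℕ) • b) + a) + (m:ℕ) • coeEval d m b := by
        rw [map_add, map_neg, map_nsmul, coeEval_apply]
        abel
      rw [e2]
      exact (cyc d).add_mem h1 (nsmul_mem_cyc hd m (by rw [coeEval_apply]; exact (b m).2))
    refine ⟨⟨sumHom d a, sumHom_mem hcomp⟩, ?_⟩
    rw [jmap_apply, QuotientAddGroup.mk'_apply, QuotientAddGroup.mk'_apply,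
      QuotientAddGroup.eq]
    refine mem_sumKer.mpr ⟨?_, ?_⟩
    · intro m
      refine neg_add_mem_cyc m (single_mem_cyc _ _ ?_ m) ?_
      · exact sumHom_mem hcomp
      · rw [coeEval_apply]
        exact hcomp m
    · rw [map_add, map_neg, sumHom_single]
      show -(sumHom d a) + sumHom d a = 0
      rw [neg_add_cancel]

lemma divSub_ne_bot (d : ℕ) (hd : 2 ≤ d) : divSub (exGroup d) ≠ ⊥ := by
  have hd1 : 0 < d := lt_of_lt_of_le two_pos hd
  have hd0 : (d:ℚ) ≠ 0 := by positivity
  intro hbot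
  have hgmem : (((d:ℚ)⁻¹ : ℚ) : AddCircle (1:ℚ)) ∈ cyc d := AddSubgroup.mem_zmultiples _
  have hgne : (((d:ℚ)⁻¹ : ℚ) : AddCircle (1:ℚ)) ≠ 0 := by
    intro h0
    obtain ⟨n, hn⟩ := (AddCircle.coe_eq_zero_iff 1).mp h0
    rw [zsmul_eq_mul, mul_one] at hn
    have h1 : (0:ℚ) < (d:ℚ)⁻¹ := by positivity
    have h2 : (d:ℚ)⁻¹ < 1 := by
      rw [inv_lt_one_iff₀]
      right
      exact_mod_cast lt_of_lt_of_le one_lt_two hd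
    rcases le_or_gt n 0 with hn0 | hn0
    · have h3 : ((n:ℚ)) ≤ 0 := by exact_mod_cast hn0
      rw [hn] at h3
      linarith
    · have h3 : (1:ℚ) ≤ (n:ℚ) := by exact_mod_cast hn0
      rw [hn] at h3
      linarith
  have hmem : jmap d ⟨_, hgmem⟩ ∈ divSub (exGroup d) := by
    rw [← range_jmap d hd0]
    exact ⟨_, rfl⟩
  rw [hbot, AddSubgroup.mem_bot] at hmem
  exact hgne (congrArg Subtype.val
    (jmap_injective d (hmem.trans (map_zero (jmap d)).symm)))

lemma DivSub_bot (d : ℕ) (hd : 2 ≤ d) : DivSub (exGroup d) = ⊥ := by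
  have hd1 : 0 < d := lt_of_lt_of_le two_pos hd
  have hd0 : (d:ℚ) ≠ 0 := by positivity
  rw [DivSub, iSup_eq_bot]
  intro φ
  rw [AddSubgroup.eq_bot_iff_forall]
  rintro _ ⟨q, rfl⟩
  have hrange : ∀ r : ℚ, φ r ∈ divSub (exGroup d) := by
    intro r
    rw [divSub, AddSubgroup.mem_iInf]
    intro n
    refine mem_smulSub.mpr ⟨φ (r / ((n:ℕ):ℚ)), ?_⟩
    rw [← map_nsmul, nsmul_eq_mul]
    congr 1
    have hn : ((n:ℕ):ℚ) ≠ 0 := by exact_mod_cast n.ne_zero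
    field_simp
  have h1 : φ q = d • φ (q / (d:ℚ)) := by
    rw [← map_nsmul, nsmul_eq_mul]
    congr 1
    field_simp
  obtain ⟨y, hy⟩ : φ (q / (d:ℚ)) ∈ (jmap d).range := by
    rw [range_jmap d hd0]
    exact hrange _
  have hdy : (d • y : ↥(cyc d)) = 0 := by
    apply Subtype.ext
    show ((d • y : ↥(cyc d)) : AddCircle (1:ℚ)) = 0
    rw [AddSubgroup.coe_nsmul]
    exact cyc_torsion hd0 y.2
  rw [h1, ← hy, ← map_nsmul, hdy, map_zero]

end Aux13

/-- There is an abelian group `M` with `div(M) ≠ Div(M)`: for `d ≥ 2`, the quotient `M`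
of `⊕_{n≥1} (1/(dn))ℤ/ℤ` by the kernel of summation on `⊕_{n≥1} (1/d)ℤ/ℤ` has
`div(M) ≅ (1/d)ℤ/ℤ ≠ 0` while `Div(M) = 0`. -/
theorem stmt_13 (d : ℕ) (hd : 2 ≤ d) :
    Nonempty (↥(divSub (exGroup d)) ≃+ ↥(cyc d)) ∧
    divSub (exGroup d) ≠ ⊥ ∧
    DivSub (exGroup d) = ⊥ := by
  have hd0 : (d:ℚ) ≠ 0 := by positivity
  exact ⟨⟨(AddEquiv.addSubgroupCongr (Aux13.range_jmap d hd0).symm).trans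
      (AddMonoidHom.ofInjective (Aux13.jmap_injective d)).symm⟩,
    Aux13.divSub_ne_bot d hd, Aux13.DivSub_bot d hd⟩
end

section
/- Let $p$ be a prime, $V$ a $2$-dimensional $\mathbb{F}_p$-vector space, and $G \subseteq \mathrm{GL}(V)$ a subgroup with $p \mid \#G$ such that $V$ is an irreducible $G$-module. If moreover $G$ is not contained in any Borel subgroup (stabilizer of a line) of $\mathrm{GL}(V)$, then $G$ contains $\mathrm{SL}(V)$. -/
open Matrix Module

lemma gen_pow {R : Type} [Ring R] (A : R) (hA : A * A = 0) :
    ∀ k : ℕ, (1 + A) ^ k = 1 + k • A := by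
  intro k
  induction k with
  | zero => simp
  | succ n ih =>
    rw [pow_succ, ih, mul_add, add_mul, add_mul, one_mul, mul_one, smul_mul_assoc, hA,
      smul_zero, add_zero, succ_nsmul, one_mul, add_assoc]

lemma gen_aux {F : Type} [Field F] (H : Subgroup (Matrix (Fin 2) (Fin 2) F)ˣ)
    (hu : ∀ t : F, ∃ h ∈ H, (h : Matrix (Fin 2) (Fin 2) F) = !![1, t; 0, 1])
    (hl : ∀ t : F, ∃ h ∈ H, (h : Matrix (Fin 2) (Fin 2) F) = !![1, 0; t, 1]) :
    ∀ m : (Matrix (Fin 2) (Fin 2) F)ˣ, (m : Matrix (Fin 2) (Fin 2) F).det = 1 → m ∈ H := by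
  have key : ∀ m : (Matrix (Fin 2) (Fin 2) F)ˣ, (m : Matrix (Fin 2) (Fin 2) F).det = 1 →
      (m : Matrix (Fin 2) (Fin 2) F) 1 0 ≠ 0 → m ∈ H := by
    intro m hdet hc
    set A : Matrix (Fin 2) (Fin 2) F := (m : Matrix (Fin 2) (Fin 2) F) with hA
    set a := A 0 0; set b := A 0 1; set c := A 1 0; set d := A 1 1
    have hAeta : A = !![a, b; c, d] := Matrix.eta_fin_two A
    have hdet' : a * d - b * c = 1 := by rw [Matrix.det_fin_two] at hdet; exact hdet
    obtain ⟨h1, h1H, h1v⟩ := hu ((1 - a) / c)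
    obtain ⟨h2, h2H, h2v⟩ := hl (-c)
    set b' : F := b + ((1 - a) / c) * d with hb'
    obtain ⟨h3, h3H, h3v⟩ := hu b'
    have hmul : h2 * h1 * m = h3 := by
      apply Units.ext
      show (h2 : Matrix (Fin 2) (Fin 2) F) * h1 * m = h3
      rw [h1v, h2v, h3v, ← hA, hAeta, Matrix.mul_fin_two, Matrix.mul_fin_two]
      ext i j
      fin_cases i <;> fin_cases j <;> simp [hb']
      all_goals field_simp
      all_goals try ring
      all_goals first
        | linear_combination hdet'
        | linear_combination hdet' * c
    have : m = h1⁻¹ * (h2⁻¹ * h3) := by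
      rw [← hmul]; group
    rw [this]
    exact H.mul_mem (H.inv_mem h1H) (H.mul_mem (H.inv_mem h2H) h3H)
  intro m hdet
  by_cases hc : (m : Matrix (Fin 2) (Fin 2) F) 1 0 ≠ 0
  · exact key m hdet hc
  · push_neg at hc
    obtain ⟨h, hH, hv⟩ := hl 1
    have h1 : ((h * m : (Matrix (Fin 2) (Fin 2) F)ˣ) : Matrix (Fin 2) (Fin 2) F).det = 1 := by
      push_cast
      rw [Matrix.det_mul, hv, hdet]
      simp [Matrix.det_fin_two]
    have ha : (m : Matrix (Fin 2) (Fin 2) F) 0 0 ≠ 0 := by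
      intro h0
      rw [Matrix.det_fin_two, h0, hc] at hdet
      simp at hdet
    have h2 : ((h * m : (Matrix (Fin 2) (Fin 2) F)ˣ) : Matrix (Fin 2) (Fin 2) F) 1 0 ≠ 0 := by
      push_cast
      rw [hv, Matrix.eta_fin_two (m : Matrix (Fin 2) (Fin 2) F), Matrix.mul_fin_two]
      simpa [hc] using ha
    have := key (h * m) h1 h2
    have hm : m = h⁻¹ * (h * m) := by group
    rw [hm]
    exact H.mul_mem (H.inv_mem hH) this

/-- Dickson: if `V` is a 2-dimensional `𝔽_p`-vector space and `G ⊆ GL(V)` is a subgroup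
with `p ∣ #G` acting irreducibly on `V` and not contained in any Borel subgroup
(stabilizer of a line), then `G` contains `SL(V)`. -/
theorem stmt_14 (p : ℕ) [Fact p.Prime] (V : Type) [AddCommGroup V]
    [Module (ZMod p) V] [FiniteDimensional (ZMod p) V]
    (hdim : Module.finrank (ZMod p) V = 2)
    (G : Subgroup (Module.End (ZMod p) V)ˣ)
    (hord : p ∣ Nat.card G)
    (hirr : ∀ U : Submodule (ZMod p) V,
      (∀ g ∈ G, U.map (g : Module.End (ZMod p) V) ≤ U) → U = ⊥ ∨ U = ⊤)
    (hborel : ¬ ∃ L : Submodule (ZMod p) V, Module.finrank (ZMod p) L = 1 ∧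
      ∀ g ∈ G, L.map (g : Module.End (ZMod p) V) ≤ L) :
    ∀ u : (Module.End (ZMod p) V)ˣ,
      LinearMap.det (u : Module.End (ZMod p) V) = 1 → u ∈ G := by
  classical
  have hp : p.Prime := Fact.out
  haveI : NeZero p := ⟨hp.ne_zero⟩
  haveI : Finite V := (Module.finite_iff_finite (R := ZMod p)).mp inferInstance
  haveI : Finite (Module.End (ZMod p) V) :=
    Finite.of_injective (fun f => (f : V → V)) (fun a b h => LinearMap.ext (congrFun h))
  haveI : Finite (Module.End (ZMod p) V)ˣ := Finite.of_injective Units.val (fun a b h => Units.ext h)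
  haveI : Fintype G := Fintype.ofFinite G
  haveI : Nontrivial V := Module.nontrivial_of_finrank_pos (by rw [hdim]; norm_num)
  -- element of order p
  have hordG : p ∣ Fintype.card G := by rwa [Nat.card_eq_fintype_card] at hord
  obtain ⟨x, hx⟩ := exists_prime_orderOf_dvd_card p hordG
  set σ : (Module.End (ZMod p) V)ˣ := (x : (Module.End (ZMod p) V)ˣ) with hσdef
  have hσG : σ ∈ G := x.2
  have hσord : orderOf σ = p := by
    rw [hσdef, show ((x : (Module.End (ZMod p) V)ˣ)) = G.subtype x from rfl,
      orderOf_injective G.subtype (Subgroup.subtype_injective G) x, hx]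
  have hσp : σ ^ p = 1 := by have := pow_orderOf_eq_one σ; rwa [hσord] at this
  have hσne : σ ≠ 1 := by
    intro h
    rw [h, orderOf_one] at hσord
    exact hp.one_lt.ne hσord
  -- the unipotent endomorphism
  set S : Module.End (ZMod p) V := (σ : Module.End (ZMod p) V) with hSdef
  have hSp : S ^ p = 1 := by
    rw [hSdef, ← Units.val_pow_eq_pow_val, hσp, Units.val_one]
  set N : Module.End (ZMod p) V := S - 1 with hNdef
  have hSN : S = 1 + N := by rw [hNdef]; abel
  have hN0 : N ≠ 0 := by
    rw [hNdef, sub_ne_zero]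
    intro h
    exact hσne (Units.ext (by rw [← hSdef, h, Units.val_one]))
  -- characteristic p
  have hinj : Function.Injective (algebraMap (ZMod p) (Module.End (ZMod p) V)) := by
    intro s t hst
    obtain ⟨v, hv⟩ := exists_ne (0 : V)
    have : s • v = t • v := by
      have h2 := congrArg (fun φ : Module.End (ZMod p) V => φ v) hst
      simpa [Module.algebraMap_end_apply] using h2
    have := sub_eq_zero.mpr this
    rw [← sub_smul] at this
    rcases smul_eq_zero.mp this with h | h
    · exact sub_eq_zero.mp h
    · exact absurd h hv
  haveI : CharP (Module.End (ZMod p) V) p := charP_of_injective_algebraMap hinj p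
  have hNp : N ^ p = 0 := by
    rw [hNdef, sub_pow_char_of_commute p (Commute.one_right S), hSp, one_pow, sub_self]
  -- find the fixed vector e1
  obtain ⟨y, hy⟩ : ∃ y, N y ≠ 0 := by
    by_contra h
    push_neg at h
    exact hN0 (LinearMap.ext fun z => h z)
  have hPex : ∃ k, (N ^ k) y = 0 := ⟨p, by rw [hNp]; rfl⟩
  set k0 := Nat.find hPex with hk0def
  have hk0 : (N ^ k0) y = 0 := Nat.find_spec hPex
  have hk0ge : 2 ≤ k0 := by
    by_contra h
    push_neg at h
    interval_cases k0
    · have := hk0; rw [pow_zero] at this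
      apply hy; rw [show y = (0 : V) from this]; simp
    · have := hk0; rw [pow_one] at this
      exact hy this
  set e1 : V := (N ^ (k0 - 1)) y with he1def
  have he1ne : e1 ≠ 0 := Nat.find_min hPex (by omega)
  have he1ker : N e1 = 0 := by
    rw [he1def, ← Module.End.mul_apply, ← pow_succ']
    have : k0 - 1 + 1 = k0 := by omega
    rw [this, hk0]
  have he1range : e1 ∈ LinearMap.range N := by
    rw [he1def]
    have : k0 - 1 = (k0 - 2) + 1 := by omega
    rw [this, pow_succ', Module.End.mul_apply]
    exact LinearMap.mem_range_self _ _
  -- the line L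
  set L : Submodule (ZMod p) V := Submodule.span (ZMod p) {e1} with hLdef
  have hL1 : finrank (ZMod p) L = 1 := finrank_span_singleton he1ne
  have hLker : L ≤ LinearMap.ker N := by
    rw [hLdef, Submodule.span_singleton_le_iff_mem, LinearMap.mem_ker]
    exact he1ker
  have hkerne : LinearMap.ker N ≠ ⊤ := by
    intro h
    apply hy
    have : y ∈ LinearMap.ker N := h ▸ Submodule.mem_top
    exact LinearMap.mem_ker.mp this
  have hker_le : finrank (ZMod p) (LinearMap.ker N) ≤ 1 := by
    by_contra h
    push_neg at h
    have h2 : finrank (ZMod p) (LinearMap.ker N) ≤ 2 := hdim ▸ Submodule.finrank_le _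
    have : finrank (ZMod p) (LinearMap.ker N) = 2 := by omega
    exact hkerne (Submodule.eq_top_of_finrank_eq (by rw [this, hdim]))
  have hkerN : LinearMap.ker N = L :=
    (Submodule.eq_of_le_of_finrank_le hLker (by rw [hL1]; exact hker_le)).symm
  have hrangeN : LinearMap.range N = L := by
    have hle : L ≤ LinearMap.range N := by
      rw [hLdef, Submodule.span_singleton_le_iff_mem]; exact he1range
    have hrk : finrank (ZMod p) (LinearMap.range N) +
        finrank (ZMod p) (LinearMap.ker N) = 2 := by
      rw [← hdim]; exact LinearMap.finrank_range_add_finrank_ker N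
    rw [hkerN, hL1] at hrk
    exact (Submodule.eq_of_le_of_finrank_le hle (by rw [hL1]; omega)).symm
  have hN2 : ∀ z, N (N z) = 0 := by
    intro z
    have : N z ∈ LinearMap.ker N := by
      rw [hkerN, ← hrangeN]; exact LinearMap.mem_range_self _ _
    exact LinearMap.mem_ker.mp this
  have hN2' : N * N = 0 := LinearMap.ext fun z => hN2 z
  -- element moving the line
  push_neg at hborel
  obtain ⟨g, hgG, hgL⟩ := hborel L hL1
  set gE : Module.End (ZMod p) V := (g : Module.End (ZMod p) V) with hgEdef
  set gE' : Module.End (ZMod p) V := ((g⁻¹ : (Module.End (ZMod p) V)ˣ) : Module.End (ZMod p) V)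
    with hgE'def
  have hgg' : gE * gE' = 1 := by
    rw [hgEdef, hgE'def, ← Units.val_mul, mul_inv_cancel, Units.val_one]
  have hg'g : gE' * gE = 1 := by
    rw [hgEdef, hgE'def, ← Units.val_mul, inv_mul_cancel, Units.val_one]
  set e2 : V := gE e1 with he2def
  have he2 : e2 ∉ L := by
    intro h
    apply hgL
    rw [hLdef, Submodule.map_span, Set.image_singleton, Submodule.span_singleton_le_iff_mem]
    exact hLdef ▸ h
  have he2ne : e2 ≠ 0 := fun h => he2 (h ▸ Submodule.zero_mem L)
  -- basis
  have li : LinearIndependent (ZMod p) ![e2, e1] := by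
    rw [linearIndependent_fin2]
    refine ⟨by simpa using he1ne, fun a ha => ?_⟩
    apply he2
    rw [hLdef]
    exact Submodule.mem_span_singleton.mpr ⟨a, by simpa using ha⟩
  set b : Basis (Fin 2) (ZMod p) V :=
    basisOfLinearIndependentOfCardEqFinrank li (by simp [hdim]) with hbdef
  have hb0 : b 0 = e2 := by rw [hbdef, coe_basisOfLinearIndependentOfCardEqFinrank]; rfl
  have hb1 : b 1 = e1 := by rw [hbdef, coe_basisOfLinearIndependentOfCardEqFinrank]; rfl
  -- N in coordinates
  obtain ⟨c, hc⟩ : ∃ c, c • e1 = N e2 := by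
    have : N e2 ∈ L := hrangeN ▸ LinearMap.mem_range_self _ _
    exact Submodule.mem_span_singleton.mp (hLdef ▸ this)
  have hcne : c ≠ 0 := by
    intro h
    apply hN0
    apply Basis.ext b
    intro i
    fin_cases i
    · show N (b 0) = 0
      rw [hb0, ← hc, h, zero_smul]
    · show N (b 1) = 0
      rw [hb1]; simp [he1ker]
  -- conjugate element
  set τ : (Module.End (ZMod p) V)ˣ := g * σ * g⁻¹ with hτdef
  have hτG : τ ∈ G := G.mul_mem (G.mul_mem hgG hσG) (G.inv_mem hgG)
  set M : Module.End (ZMod p) V := gE * N * gE' with hMdef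
  have hτval : (τ : Module.End (ZMod p) V) = 1 + M := by
    rw [hτdef, Units.val_mul, Units.val_mul, ← hgEdef, ← hSdef, ← hgE'def, hSN, hMdef]
    rw [mul_add, add_mul, mul_one, hgg']
  have hgx : ∀ z : Module.End (ZMod p) V, gE' * (gE * z) = z := fun z => by
    rw [← mul_assoc, hg'g, one_mul]
  have hM2 : M * M = 0 := by
    rw [hMdef]
    simp only [mul_assoc, hgx]
    rw [show N * (N * gE') = (N * N) * gE' from by rw [mul_assoc], hN2', zero_mul, mul_zero]
  have hg'e2 : gE' e2 = e1 := by
    rw [he2def, ← Module.End.mul_apply, hg'g, Module.End.one_apply]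
  have hMe2 : M e2 = 0 := by
    rw [hMdef, Module.End.mul_apply, Module.End.mul_apply, hg'e2, he1ker, map_zero]
  obtain ⟨d, hd⟩ : ∃ d, M e1 = d • e2 := by
    have h1 : N (gE' e1) ∈ L := hrangeN ▸ LinearMap.mem_range_self _ _
    obtain ⟨k, hk⟩ := Submodule.mem_span_singleton.mp (hLdef ▸ h1)
    refine ⟨k, ?_⟩
    rw [hMdef, Module.End.mul_apply, Module.End.mul_apply, ← hk, LinearMap.map_smul, ← he2def]
  have hdne : d ≠ 0 := by
    intro h
    apply hN0
    have hM0 : M = 0 := by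
      apply Basis.ext b
      intro i
      fin_cases i
      · show M (b 0) = 0
        rw [hb0]; simp [hMe2]
      · show M (b 1) = 0
        rw [hb1]; simp [hd, h]
    have : N = gE' * M * gE := by
      rw [hMdef]
      simp only [mul_assoc, hgx]
      rw [hg'g, mul_one]
    rw [this, hM0, mul_zero, zero_mul]
  -- matrix picture
  set f := LinearMap.toMatrixAlgEquiv b with hfdef
  set Φ : (Module.End (ZMod p) V)ˣ ≃* (Matrix (Fin 2) (Fin 2) (ZMod p))ˣ :=
    Units.mapEquiv (f : Module.End (ZMod p) V ≃* Matrix (Fin 2) (Fin 2) (ZMod p)) with hΦdef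
  set H : Subgroup (Matrix (Fin 2) (Fin 2) (ZMod p))ˣ := G.map Φ.toMonoidHom with hHdef
  have happ : ∀ w : (Module.End (ZMod p) V)ˣ,
      ((Φ w : (Matrix (Fin 2) (Fin 2) (ZMod p))ˣ) : Matrix (Fin 2) (Fin 2) (ZMod p)) =
        f (w : Module.End (ZMod p) V) := fun w => rfl
  have hNb0 : N (b 0) = c • b 1 := by rw [hb0, hb1, ← hc]
  have hNb1 : N (b 1) = 0 := by rw [hb1, he1ker]
  have hfN : f N = !![0, 0; c, 0] := by
    ext i j
    rw [hfdef, LinearMap.toMatrixAlgEquiv_apply]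
    fin_cases j <;> fin_cases i <;>
      simp [hNb0, hNb1, Basis.repr_self, Finsupp.single_apply]
  have hMb0 : M (b 0) = 0 := by rw [hb0, hMe2]
  have hMb1 : M (b 1) = d • b 0 := by rw [hb1, hd, hb0]
  have hfM : f M = !![0, d; 0, 0] := by
    ext i j
    rw [hfdef, LinearMap.toMatrixAlgEquiv_apply]
    fin_cases j <;> fin_cases i <;>
      simp [hMb0, hMb1, Basis.repr_self, Finsupp.single_apply]
  have hσk : ∀ k : ℕ, ((σ ^ k : (Module.End (ZMod p) V)ˣ) : Module.End (ZMod p) V)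
      = 1 + k • N := by
    intro k
    rw [Units.val_pow_eq_pow_val, ← hSdef, hSN, gen_pow N hN2' k]
  have hτ2 : M * M = 0 := hM2
  have hτk : ∀ k : ℕ, ((τ ^ k : (Module.End (ZMod p) V)ˣ) : Module.End (ZMod p) V)
      = 1 + k • M := by
    intro k
    rw [Units.val_pow_eq_pow_val, hτval, gen_pow M hM2 k]
  have hfsmul : ∀ (k : ℕ) (A : Module.End (ZMod p) V),
      f (1 + k • A) = 1 + ((k : ZMod p)) • f A := by
    intro k A
    rw [map_add, _root_.map_one, map_nsmul, Nat.cast_smul_eq_nsmul]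
  have hlower : ∀ t : ZMod p, ∃ h ∈ H,
      (h : Matrix (Fin 2) (Fin 2) (ZMod p)) = !![1, 0; t, 1] := by
    intro t
    refine ⟨Φ (σ ^ ((t * c⁻¹).val)), Subgroup.mem_map_of_mem _ (G.pow_mem hσG _), ?_⟩
    rw [happ, hσk, hfsmul, hfN]
    have hcast : (((t * c⁻¹).val : ℕ) : ZMod p) = t * c⁻¹ := by
      rw [ZMod.natCast_val, ZMod.cast_id]
    rw [hcast]
    ext i j
    fin_cases i <;> fin_cases j <;> simp <;> field_simp
  have hupper : ∀ t : ZMod p, ∃ h ∈ H,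
      (h : Matrix (Fin 2) (Fin 2) (ZMod p)) = !![1, t; 0, 1] := by
    intro t
    refine ⟨Φ (τ ^ ((t * d⁻¹).val)), Subgroup.mem_map_of_mem _ (G.pow_mem hτG _), ?_⟩
    rw [happ, hτk, hfsmul, hfM]
    have hcast : (((t * d⁻¹).val : ℕ) : ZMod p) = t * d⁻¹ := by
      rw [ZMod.natCast_val, ZMod.cast_id]
    rw [hcast]
    ext i j
    fin_cases i <;> fin_cases j <;> simp <;> field_simp
  intro u hdetu
  have hudet : ((Φ u : (Matrix (Fin 2) (Fin 2) (ZMod p))ˣ) : Matrix (Fin 2) (Fin 2) (ZMod p)).det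
      = 1 := by
    rw [happ]
    rw [show f ((u : Module.End (ZMod p) V)) =
      LinearMap.toMatrix b b ((u : Module.End (ZMod p) V)) from rfl, LinearMap.det_toMatrix]
    exact hdetu
  have hmem : Φ u ∈ H := gen_aux H hupper hlower (Φ u) hudet
  rw [hHdef] at hmem
  have := Subgroup.mem_map_equiv.mp hmem
  simpa using this
end

section
/- Let $p$ be a prime, let $B \subseteq \mathrm{GL}_2(\mathbb{F}_p)$ be the upper-triangular Borel subgroup, let $U \subseteq B$ be the subgroup of upper unitriangular matrices, and let $\chi_1, \chi_2 : B \to \mathbb{F}_p^\ast$ be the diagonal-entry characters. Let $G \subseteq B$ be a subgroup containing $U$. If the restriction $\chi_1|_G \neq (\chi_2|_G)^2$, then $H^1(G, V) = 0$, where $V = \mathbb{F}_p^2$ with the natural $G$-action. -/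
open Matrix

/-- The natural representation of a subgroup `G ⊆ GL₂(𝔽_p)` on `𝔽_p²`. -/
noncomputable def glRep (p : ℕ) [Fact p.Prime] (G : Subgroup (GL (Fin 2) (ZMod p))) :
    Representation (ZMod p) G (Fin 2 → ZMod p) where
  toFun g := Matrix.toLin' (g : GL (Fin 2) (ZMod p))
  map_one' := by
    simp only [OneMemClass.coe_one, Units.val_one, Matrix.toLin'_one]
    rfl
  map_mul' g h := by
    ext v : 1
    simp [Matrix.toLin'_mul, Module.End.mul_eq_comp]

private lemma zmod_lin {p : ℕ} [Fact p.Prime] (y : ZMod p → ZMod p)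
    (hadd : ∀ a b, y (a + b) = y a + y b) (b : ZMod p) : y b = b * y 1 := by
  let φ : ZMod p →+ ZMod p := AddMonoidHom.mk' y hadd
  have hb : b.val • (1 : ZMod p) = b := by
    rw [nsmul_eq_mul, mul_one]; exact ZMod.natCast_rightInverse b
  calc y b = φ (b.val • (1 : ZMod p)) := by rw [hb]; rfl
    _ = b.val • φ 1 := map_nsmul φ _ _
    _ = b * y 1 := by rw [nsmul_eq_mul, ZMod.natCast_rightInverse b]; rfl

/-- Matrix of an element of a subgroup of `GL₂`. -/
private def mat {p : ℕ} [Fact p.Prime] {G : Subgroup (GL (Fin 2) (ZMod p))} (g : G) :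
    Matrix (Fin 2) (Fin 2) (ZMod p) :=
  ((g : GL (Fin 2) (ZMod p)) : Matrix (Fin 2) (Fin 2) (ZMod p))

section
variable {p : ℕ} [Fact p.Prime] {G : Subgroup (GL (Fin 2) (ZMod p))}

private lemma rho_apply0 (g : G) (v : Fin 2 → ZMod p) :
    (Rep.of (glRep p G)).ρ g v 0 = mat g 0 0 * v 0 + mat g 0 1 * v 1 := by
  show Matrix.mulVec _ v 0 = _
  simp [Matrix.mulVec, dotProduct, Fin.sum_univ_two, mat]

private lemma rho_apply1 (g : G) (v : Fin 2 → ZMod p) :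
    (Rep.of (glRep p G)).ρ g v 1 = mat g 1 0 * v 0 + mat g 1 1 * v 1 := by
  show Matrix.mulVec _ v 1 = _
  simp [Matrix.mulVec, dotProduct, Fin.sum_univ_two, mat]

private lemma mat_mul (g h : G) : mat (g * h) = mat g * mat h := by simp [mat]

private lemma mat_one : mat (1 : G) = 1 := by simp [mat]

private lemma diag_ne_zero (g : G) (h10 : mat g 1 0 = 0) :
    mat g 0 0 ≠ 0 ∧ mat g 1 1 ≠ 0 := by
  have hdet : IsUnit ((mat g).det) :=
    (Matrix.isUnit_iff_isUnit_det _).mp (g : GL (Fin 2) (ZMod p)).isUnit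
  rw [Matrix.det_fin_two, h10] at hdet
  simp only [mul_zero, sub_zero] at hdet
  have hne : mat g 0 0 * mat g 1 1 ≠ 0 := hdet.ne_zero
  exact ⟨left_ne_zero_of_mul hne, right_ne_zero_of_mul hne⟩

private lemma inj_mat (g h : G) (hgh : mat g = mat h) : g = h :=
  Subtype.ext (Units.ext hgh)

end

/-- Let `G` be a subgroup of the upper triangular Borel `B ⊆ GL₂(𝔽_p)` containing the
unipotent subgroup `U`, with diagonal characters `χ₁, χ₂` (the diagonal entries).  If
`χ₁|_G ≠ (χ₂|_G)²`, then `H¹(G, 𝔽_p²) = 0` for the natural action. -/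
theorem stmt_16 (p : ℕ) [Fact p.Prime]
    (G : Subgroup (GL (Fin 2) (ZMod p)))
    (hB : ∀ g ∈ G, (g : Matrix (Fin 2) (Fin 2) (ZMod p)) 1 0 = 0)
    (hU : ∀ b : ZMod p, ∃ u ∈ G, (u : Matrix (Fin 2) (Fin 2) (ZMod p)) = !![1, b; 0, 1])
    (hchi : ∃ g ∈ G, (g : Matrix (Fin 2) (Fin 2) (ZMod p)) 0 0 ≠
      ((g : Matrix (Fin 2) (Fin 2) (ZMod p)) 1 1) ^ 2) :
    Subsingleton (groupCohomology.H1 (Rep.of (glRep p G))) := by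
  refine subsingleton_of_forall_eq 0 fun x => ?_
  refine groupCohomology.H1_induction_on x fun f => ?_
  rw [groupCohomology.H1π_eq_zero_iff]
  suffices hcob : ∃ x : Fin 2 → ZMod p, ∀ g : G, (Rep.of (glRep p G)).ρ g x - x = f.1 g by
    obtain ⟨x, hx⟩ := hcob
    rw [groupCohomology.coboundaries₁, LinearMap.mem_range]
    exact ⟨x, funext fun g => by rw [groupCohomology.d₀₁_hom_apply]; exact hx g⟩
  -- basic facts
  have hB' : ∀ g : G, mat g 1 0 = 0 := fun g => hB _ g.2
  have ha0 : ∀ g : G, mat g 0 0 ≠ 0 := fun g => (diag_ne_zero g (hB' g)).1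
  have hd0 : ∀ g : G, mat g 1 1 ≠ 0 := fun g => (diag_ne_zero g (hB' g)).2
  -- the unipotent family
  choose uu humem humat using hU
  set u : ZMod p → G := fun b => ⟨uu b, humem b⟩ with hu_def
  have hmat : ∀ b, mat (u b) = !![1, b; 0, 1] := fun b => humat b
  have hu00 : ∀ b, mat (u b) 0 0 = 1 := fun b => by rw [hmat]; simp
  have hu01 : ∀ b, mat (u b) 0 1 = b := fun b => by rw [hmat]; simp
  have hu11 : ∀ b, mat (u b) 1 1 = 1 := fun b => by rw [hmat]; simp
  -- entries of products
  have h00mul : ∀ g h : G, mat (g * h) 0 0 = mat g 0 0 * mat h 0 0 := by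
    intro g h
    rw [mat_mul, Matrix.mul_apply, Fin.sum_univ_two, hB' h, mul_zero, add_zero]
  have h11mul : ∀ g h : G, mat (g * h) 1 1 = mat g 1 1 * mat h 1 1 := by
    intro g h
    rw [mat_mul, Matrix.mul_apply, Fin.sum_univ_two, hB' g, zero_mul, zero_add]
  have h01mul : ∀ g h : G, mat (g * h) 0 1 = mat g 0 0 * mat h 0 1 + mat g 0 1 * mat h 1 1 := by
    intro g h
    rw [mat_mul, Matrix.mul_apply, Fin.sum_univ_two]
  -- factoring through the unipotent family
  have hfac : ∀ X Y : G, mat X 0 0 = mat Y 0 0 → mat X 1 1 = mat Y 1 1 →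
      ∃ t, X = u t * Y ∧ mat X 0 1 = mat Y 0 1 + t * mat Y 1 1 := by
    intro X Y hXY00 hXY11
    have hrel : mat X 0 1 = mat Y 0 1 + (mat X 0 1 - mat Y 0 1) / mat Y 1 1 * mat Y 1 1 := by
      rw [div_mul_cancel₀ _ (hd0 Y)]; ring
    refine ⟨(mat X 0 1 - mat Y 0 1) / mat Y 1 1, ?_, hrel⟩
    apply inj_mat
    rw [mat_mul, hmat]
    ext i j
    fin_cases i <;> fin_cases j <;>
      simp only [Matrix.mul_apply, Fin.sum_univ_two] <;>
      simp [hB' X, hB' Y, hXY00, hXY11] <;>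
      linear_combination hrel
  have humul : ∀ b c : ZMod p, u b * u c = u (b + c) := by
    intro b c
    apply inj_mat
    rw [mat_mul, hmat, hmat, hmat, Matrix.mul_fin_two]
    norm_num
    rw [add_comm c b]
  -- cocycle identities
  have hc := (groupCohomology.mem_cocycles₁_iff (A := Rep.of (glRep p G)) f.1).1 f.2
  have hc0 : ∀ g h : G, f.1 (g * h) 0 = mat g 0 0 * f.1 h 0 + mat g 0 1 * f.1 h 1 + f.1 g 0 := by
    intro g h
    have := congrFun (hc g h) 0
    rw [Pi.add_apply, rho_apply0] at this
    exact this
  have hc1 : ∀ g h : G, f.1 (g * h) 1 = mat g 1 1 * f.1 h 1 + f.1 g 1 := by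
    intro g h
    have := congrFun (hc g h) 1
    rw [Pi.add_apply, rho_apply1, hB' g, zero_mul, zero_add] at this
    exact this
  -- y := f · 1 vanishes on U
  set c : ZMod p := f.1 (u 1) 1 with hc_def
  have hyadd : ∀ b b' : ZMod p, f.1 (u (b + b')) 1 = f.1 (u b) 1 + f.1 (u b') 1 := by
    intro b b'
    rw [← humul, hc1, hu11, one_mul, add_comm]
  have hylin : ∀ b, f.1 (u b) 1 = b * c := fun b => zmod_lin (fun b => f.1 (u b) 1) hyadd b
  obtain ⟨g0, hg0G, hg0ne⟩ := hchi
  set gz : G := ⟨g0, hg0G⟩ with hgz_def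
  have hgz : mat gz 0 0 ≠ (mat gz 1 1) ^ 2 := hg0ne
  have hczero : c = 0 := by
    obtain ⟨t, hfact, hrel⟩ := hfac (gz * u 1) gz
      (by rw [h00mul, hu00, mul_one]) (by rw [h11mul, hu11, mul_one])
    have htd : t * mat gz 1 1 = mat gz 0 0 := by
      rw [h01mul, hu01, hu11, mul_one, mul_one] at hrel
      linear_combination -hrel
    have h1 : f.1 (gz * u 1) 1 = mat gz 1 1 * c + f.1 gz 1 := hc1 gz (u 1)
    have h2 : f.1 (u t * gz) 1 = f.1 gz 1 + t * c := by
      rw [hc1, hu11, one_mul, hylin t, add_comm]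
    rw [hfact, h2] at h1
    -- h1 : f gz 1 + t*c = d*c + f gz 1, so d*c = t*c
    have hdc : mat gz 1 1 * c = t * c := by linear_combination -h1
    by_contra hcne
    apply hgz
    have := mul_right_cancel₀ hcne hdc
    -- this : mat gz 1 1 = t
    rw [← htd, ← this, sq]
  have hyU : ∀ b, f.1 (u b) 1 = 0 := fun b => by rw [hylin, hczero, mul_zero]
  -- x on U is linear
  set e : ZMod p := f.1 (u 1) 0 with he_def
  have hxadd : ∀ b b' : ZMod p, f.1 (u (b + b')) 0 = f.1 (u b) 0 + f.1 (u b') 0 := by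
    intro b b'
    rw [← humul, hc0, hu00, hu01, hyU, mul_zero, one_mul, add_zero, add_comm]
  have hxlin : ∀ b, f.1 (u b) 0 = b * e := fun b => zmod_lin (fun b => f.1 (u b) 0) hxadd b
  -- Step C : f g 1 = d(g)·e - e for all g
  have hyC : ∀ g : G, f.1 g 1 = mat g 1 1 * e - e := by
    intro g
    obtain ⟨t, hfact, hrel⟩ := hfac (g * u 1) g
      (by rw [h00mul, hu00, mul_one]) (by rw [h11mul, hu11, mul_one])
    have htd : t * mat g 1 1 = mat g 0 0 := by
      rw [h01mul, hu01, hu11, mul_one, mul_one] at hrel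
      linear_combination -hrel
    have h1 : f.1 (g * u 1) 0 = mat g 0 0 * e + f.1 g 0 := by
      rw [hc0, hyU, mul_zero, add_zero, ← he_def]
    have h2 : f.1 (u t * g) 0 = f.1 g 0 + t * f.1 g 1 + t * e := by
      rw [hc0, hu00, hu01, one_mul, hxlin t]
    rw [hfact, h2] at h1
    -- h1 : f g 0 + t * f g 1 + t * e = a * e + f g 0
    have key : mat g 0 0 * (f.1 g 1 + e) = mat g 0 0 * (e * mat g 1 1) := by
      linear_combination (mat g 1 1) * h1 - (f.1 g 1 + e) * htd
    have := mul_left_cancel₀ (ha0 g) key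
    linear_combination this
  -- the twisted part x' g := f g 0 - b(g)·e is a cocycle for χ₁
  have hx' : ∀ g h : G, f.1 (g * h) 0 - mat (g * h) 0 1 * e =
      mat g 0 0 * (f.1 h 0 - mat h 0 1 * e) + (f.1 g 0 - mat g 0 1 * e) := by
    intro g h
    have h1 := hc0 g h
    have h2 := h01mul g h
    have h3 := hyC h
    linear_combination h1 - e * h2 + mat g 0 1 * h3
  have hx'U : ∀ b, f.1 (u b) 0 - mat (u b) 0 1 * e = 0 := by
    intro b
    rw [hxlin b, hu01]
    ring
  -- main claim: x' is a coboundary for the character χ₁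
  suffices hw : ∃ w : ZMod p, ∀ g : G, f.1 g 0 - mat g 0 1 * e = w * (mat g 0 0 - 1) by
    obtain ⟨w, hw⟩ := hw
    refine ⟨![w, e], fun g => ?_⟩
    funext i
    fin_cases i
    · show (Rep.of (glRep p G)).ρ g ![w, e] 0 - ![w, e] 0 = f.1 g 0
      rw [rho_apply0]
      simp only [Matrix.cons_val_zero, Matrix.cons_val_one, Matrix.head_cons]
      linear_combination -(hw g)
    · show (Rep.of (glRep p G)).ρ g ![w, e] 1 - ![w, e] 1 = f.1 g 1
      rw [rho_apply1, hB' g]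
      simp only [Matrix.cons_val_zero, Matrix.cons_val_one, Matrix.head_cons]
      linear_combination -(hyC g)
  by_cases hA : ∀ g : G, mat g 0 0 = 1
  · -- the character χ₁ is trivial on G : use g^(p-1) ∈ U
    refine ⟨0, fun g => ?_⟩
    rw [zero_mul]
    -- powers
    have h11pow : ∀ n : ℕ, mat (g ^ n) 1 1 = (mat g 1 1) ^ n := by
      intro n
      induction n with
      | zero => simp [pow_zero, mat_one, Matrix.one_apply]
      | succ n ih => rw [pow_succ, h11mul, ih, pow_succ]
    have hxpow : ∀ n : ℕ, f.1 (g ^ n) 0 - mat (g ^ n) 0 1 * e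
        = n • (f.1 g 0 - mat g 0 1 * e) := by
      intro n
      induction n with
      | zero =>
        simp only [pow_zero, zero_smul]
        have h1 : f.1 (1 : G) 0 = 0 := by
          rw [show ((1 : G) : _) = _ from rfl]
          exact congrFun (groupCohomology.cocycles₁_map_one f) 0
        rw [h1, mat_one]
        simp [Matrix.one_apply]
      | succ n ih =>
        rw [pow_succ, hx' (g ^ n) g, hA (g ^ n), one_mul, ih, succ_nsmul]
        exact add_comm _ _
    -- g ^ (p-1) lies in the unipotent family
    have hgu : g ^ (p - 1) = u (mat (g ^ (p - 1)) 0 1) := by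
      apply inj_mat
      rw [hmat]
      ext i j
      fin_cases i <;> fin_cases j
      · show mat (g ^ (p - 1)) 0 0 = 1
        rw [hA (g ^ (p - 1))]
      · rfl
      · show mat (g ^ (p - 1)) 1 0 = 0
        rw [hB' (g ^ (p - 1))]
      · show mat (g ^ (p - 1)) 1 1 = 1
        rw [h11pow, ZMod.pow_card_sub_one_eq_one (hd0 g)]
    have hz : f.1 (g ^ (p - 1)) 0 - mat (g ^ (p - 1)) 0 1 * e = 0 := by
      rw [hgu]
      exact hx'U _
    rw [hxpow (p - 1)] at hz
    have hcast : ((p - 1 : ℕ) : ZMod p) = -1 := by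
      have h1 : 1 ≤ p := (Fact.out : p.Prime).one_lt.le
      rw [Nat.cast_sub h1, ZMod.natCast_self, Nat.cast_one, zero_sub]
    rw [nsmul_eq_mul, hcast] at hz
    linear_combination -hz
  · -- the character χ₁ is nontrivial on G
    push_neg at hA
    obtain ⟨g₁, hg₁⟩ := hA
    have hswap : ∀ g h : G, f.1 (g * h) 0 - mat (g * h) 0 1 * e
        = f.1 (h * g) 0 - mat (h * g) 0 1 * e := by
      intro g h
      obtain ⟨t, hfact, -⟩ := hfac (g * h) (h * g)
        (by rw [h00mul, h00mul, mul_comm]) (by rw [h11mul, h11mul, mul_comm])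
      rw [hfact, hx' (u t) (h * g), hu00, one_mul, hx'U t, add_zero]
    refine ⟨(f.1 g₁ 0 - mat g₁ 0 1 * e) / (mat g₁ 0 0 - 1), fun g => ?_⟩
    have hne : mat g₁ 0 0 - 1 ≠ 0 := sub_ne_zero.mpr hg₁
    rw [div_mul_eq_mul_div, eq_div_iff hne]
    have h1 := hx' g g₁
    have h2 := hx' g₁ g
    have h3 := hswap g g₁
    linear_combination h1 - h2 - h3
end
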